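/- arXiv:2601.08029 — 12 statements merged into one kernel-verified Lean document; each statement's English description precedes it below -/
import Mathlib

section
/- Let ψ : ℝ → EuclideanSpace ℂ (Fin d) be a curve of unit vectors (‖ψ(α)‖ = 1 for all α) that is differentiable at α₀, and let (v_i)_{i=1}^d be an orthonormal basis of ℂ^d such that the inner product ⟨v_i, ψ(α)⟩ is a real number for every i and every α. Define the measurement probabilities p_i(α) = |⟨v_i, ψ(α)⟩|², and assume p_i(α₀) ≠ 0 for every i. Then the classical Fisher information equals the quantum Fisher information: Σ_{i=1}^d (p_i'(α₀))² / p_i(α₀) = 4 ‖ψ'(α₀)‖², where ψ'(α₀) is the derivative of ψ at α₀ and p_i' is the derivative of p_i. -/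
/-- Observation 1: measuring a real family of pure states in a real orthonormal basis
saturates the quantum Fisher information. -/
theorem classical_fisher_eq_quantum_fisher_of_real_basis
    {d : ℕ} (ψ : ℝ → EuclideanSpace ℂ (Fin d)) (α₀ : ℝ)
    (ψ' : EuclideanSpace ℂ (Fin d)) (hψ : HasDerivAt ψ ψ' α₀)
    (hnorm : ∀ α : ℝ, ‖ψ α‖ = 1)
    (b : OrthonormalBasis (Fin d) ℂ (EuclideanSpace ℂ (Fin d)))
    (hreal : ∀ (i : Fin d) (α : ℝ), (inner ℂ (b i) (ψ α) : ℂ).im = 0)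
    (p : Fin d → ℝ → ℝ)
    (hp : ∀ (i : Fin d) (α : ℝ), p i α = ‖(inner ℂ (b i) (ψ α) : ℂ)‖ ^ 2)
    (hp0 : ∀ i : Fin d, p i α₀ ≠ 0) :
    ∑ i : Fin d, (deriv (p i) α₀) ^ 2 / p i α₀ = 4 * ‖ψ'‖ ^ 2 := by
  -- complex inner product curve and its derivative
  have hf : ∀ i : Fin d, HasDerivAt (fun α => (inner ℂ (b i) (ψ α) : ℂ))
      (inner ℂ (b i) ψ') α₀ := by
    intro i
    have h := (hasDerivAt_const α₀ (b i)).inner ℂ hψ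
    simpa using h
  -- imaginary part of inner ℂ (b i) ψ' is zero
  have him : ∀ i : Fin d, (inner ℂ (b i) ψ' : ℂ).im = 0 := by
    intro i
    have h1 : HasDerivAt (fun α => ((inner ℂ (b i) (ψ α) : ℂ)).im)
        ((inner ℂ (b i) ψ' : ℂ).im) α₀ :=
      (Complex.imCLM.hasFDerivAt.comp_hasDerivAt α₀ (hf i))
    have h2 : (fun α => ((inner ℂ (b i) (ψ α) : ℂ)).im) = fun _ => (0:ℝ) := by
      funext α; exact hreal i α
    rw [h2] at h1
    have := h1.deriv
    simpa using this.symm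
  -- real part curve
  set g : Fin d → ℝ → ℝ := fun i α => ((inner ℂ (b i) (ψ α) : ℂ)).re with hg
  have hgd : ∀ i : Fin d, HasDerivAt (g i) ((inner ℂ (b i) ψ' : ℂ).re) α₀ := fun i =>
    (Complex.reCLM.hasFDerivAt.comp_hasDerivAt α₀ (hf i))
  -- p i = (g i)^2
  have hpg : ∀ i α, p i α = (g i α) ^ 2 := by
    intro i α
    rw [hp i α, Complex.sq_norm, Complex.normSq_apply, hreal i α]
    simp [hg]
    ring
  have hpd : ∀ i : Fin d, HasDerivAt (p i) (2 * g i α₀ * (inner ℂ (b i) ψ' : ℂ).re) α₀ := by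
    intro i
    have : HasDerivAt (fun α => g i α * g i α) _ α₀ := ((hgd i).mul (hgd i))
    have h2 : (fun α => g i α * g i α) = p i := by
      funext α; rw [hpg i α]; ring
    rw [h2] at this
    convert this using 1; ring
  have key : ∀ i : Fin d, (deriv (p i) α₀) ^ 2 / p i α₀ = 4 * (inner ℂ (b i) ψ' : ℂ).re ^ 2 := by
    intro i
    rw [(hpd i).deriv, hpg i α₀]
    have hgne : g i α₀ ≠ 0 := by
      intro h; apply hp0 i; rw [hpg i α₀, h]; ring
    field_simp
    ring
  simp only [key]
  rw [← Finset.mul_sum]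
  congr 1
  -- ∑ re^2 = ‖ψ'‖^2
  have : ‖ψ'‖ ^ 2 = ∑ i, ‖(inner ℂ (b i) ψ' : ℂ)‖ ^ 2 := by
    rw [← b.repr.norm_map ψ', EuclideanSpace.norm_eq]
    rw [Real.sq_sqrt (by positivity)]
    congr 1; funext i
    rw [b.repr_apply_apply]
  rw [this]
  congr 1; funext i
  rw [Complex.sq_norm, Complex.normSq_apply, him i]
  ring
end

section
/- Let (v_i)_{i=1}^d be an orthonormal basis of EuclideanSpace ℂ (Fin d), and let ψ, w ∈ ℂ^d be vectors such that ⟨v_i, ψ⟩ ≠ 0 for every i. Then Σ_{i=1}^d ( 2·Re(⟨v_i, w⟩ · conj(⟨v_i, ψ⟩)) )² / |⟨v_i, ψ⟩|² ≤ 4‖w‖². -/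
/-- The classical Fisher information of a measurement in an orthonormal basis is bounded
by the quantum Fisher information: for an orthonormal basis `(v i)` and vectors `ψ`, `w`
with `⟨v i, ψ⟩ ≠ 0` for all `i`, one has
`Σ i (2 Re(⟨v i, w⟩ conj ⟨v i, ψ⟩))² / |⟨v i, ψ⟩|² ≤ 4 ‖w‖²`. -/
theorem classical_fisher_le_quantum_fisher
    {d : ℕ} (b : OrthonormalBasis (Fin d) ℂ (EuclideanSpace ℂ (Fin d)))
    (ψ w : EuclideanSpace ℂ (Fin d))
    (hne : ∀ i : Fin d, (inner ℂ (b i) ψ : ℂ) ≠ 0) :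
    ∑ i : Fin d,
        (2 * ((inner ℂ (b i) w : ℂ) * (starRingEnd ℂ) (inner ℂ (b i) ψ : ℂ)).re) ^ 2
          / ‖(inner ℂ (b i) ψ : ℂ)‖ ^ 2
      ≤ 4 * ‖w‖ ^ 2 := by
  have parseval : ∑ i : Fin d, ‖(inner ℂ (b i) w : ℂ)‖ ^ 2 = ‖w‖ ^ 2 := by
    have h1 : ‖b.repr w‖ = ‖w‖ := b.repr.norm_map w
    have h2 : ‖b.repr w‖ ^ 2 = ∑ i : Fin d, ‖b.repr w i‖ ^ 2 := by
      rw [EuclideanSpace.norm_eq, Real.sq_sqrt]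
      positivity
    simp only [b.repr_apply_apply] at h2
    rw [← h2, h1]
  calc ∑ i : Fin d,
        (2 * ((inner ℂ (b i) w : ℂ) * (starRingEnd ℂ) (inner ℂ (b i) ψ : ℂ)).re) ^ 2
          / ‖(inner ℂ (b i) ψ : ℂ)‖ ^ 2
      ≤ ∑ i : Fin d, 4 * ‖(inner ℂ (b i) w : ℂ)‖ ^ 2 := by
        apply Finset.sum_le_sum
        intro i _
        have hc : (0:ℝ) < ‖(inner ℂ (b i) ψ : ℂ)‖ ^ 2 := by
          have := norm_pos_iff.mpr (hne i)
          positivity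
        rw [div_le_iff₀ hc]
        have hre : |((inner ℂ (b i) w : ℂ) * (starRingEnd ℂ) (inner ℂ (b i) ψ : ℂ)).re|
            ≤ ‖(inner ℂ (b i) w : ℂ)‖ * ‖(inner ℂ (b i) ψ : ℂ)‖ := by
          calc |((inner ℂ (b i) w : ℂ) * (starRingEnd ℂ) (inner ℂ (b i) ψ : ℂ)).re|
              ≤ ‖(inner ℂ (b i) w : ℂ) * (starRingEnd ℂ) (inner ℂ (b i) ψ : ℂ)‖ :=
                Complex.abs_re_le_norm _
            _ = ‖(inner ℂ (b i) w : ℂ)‖ * ‖(inner ℂ (b i) ψ : ℂ)‖ := by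
                rw [norm_mul, RingHomIsometric.norm_map]
        have hsq : ((inner ℂ (b i) w : ℂ) * (starRingEnd ℂ) (inner ℂ (b i) ψ : ℂ)).re ^ 2
            ≤ (‖(inner ℂ (b i) w : ℂ)‖ * ‖(inner ℂ (b i) ψ : ℂ)‖) ^ 2 := by
          rw [← sq_abs]
          exact pow_le_pow_left₀ (abs_nonneg _) hre 2
        nlinarith [hsq]
    _ = 4 * ‖w‖ ^ 2 := by rw [← Finset.mul_sum, parseval]
end

section
/- Let p₁ : ℝ → ℝ be differentiable at α with 0 < p₁(α) < 1, set p₂ = 1 − p₁, and let λ₁ ≠ λ₂ be real numbers. Define the expectation E(α) = λ₁ p₁(α) + λ₂ p₂(α) and the variance V(α) = λ₁² p₁(α) + λ₂² p₂(α) − E(α)². If p₁'(α) ≠ 0, then V(α) / (E'(α))² = 1 / ( (p₁'(α))²/p₁(α) + (p₁'(α))²/p₂(α) ), i.e. the ratio of variance to squared expectation-derivative equals the reciprocal of the classical Fisher information, independently of the eigenvalues λ₁, λ₂. -/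
/-- Observation 2: for a two-outcome observable, the ratio of the variance to the squared
derivative of the expectation equals the reciprocal of the classical Fisher information,
independently of the two eigenvalues. -/
theorem two_outcome_saturates_classical_cramer_rao
    (p₁ p₂ : ℝ → ℝ) (α : ℝ) (p₁' : ℝ) (hd : HasDerivAt p₁ p₁' α)
    (h0 : 0 < p₁ α) (h1 : p₁ α < 1)
    (hp₂ : ∀ β : ℝ, p₂ β = 1 - p₁ β)
    (lam₁ lam₂ : ℝ) (hlam : lam₁ ≠ lam₂)
    (E V : ℝ → ℝ)
    (hE : ∀ β : ℝ, E β = lam₁ * p₁ β + lam₂ * p₂ β)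
    (hV : ∀ β : ℝ, V β = lam₁ ^ 2 * p₁ β + lam₂ ^ 2 * p₂ β - (E β) ^ 2)
    (hp' : p₁' ≠ 0) :
    V α / (deriv E α) ^ 2 = 1 / (p₁' ^ 2 / p₁ α + p₁' ^ 2 / p₂ α) := by
  have hEfun : E = fun β => (lam₁ - lam₂) * p₁ β + lam₂ := by
    funext β; rw [hE β, hp₂ β]; ring
  have hdE : HasDerivAt E ((lam₁ - lam₂) * p₁') α := by
    rw [hEfun]
    simpa using (hd.const_mul (lam₁ - lam₂)).add_const lam₂
  rw [hdE.deriv, hV α, hE α, hp₂ α]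
  have h2 : p₂ α = 1 - p₁ α := hp₂ α
  have hne : p₁ α ≠ 0 := ne_of_gt h0
  have hne2 : (1 : ℝ) - p₁ α ≠ 0 := by linarith
  have hl : lam₁ - lam₂ ≠ 0 := sub_ne_zero.mpr hlam

  have key : p₁' ^ 2 / p₁ α + p₁' ^ 2 / (1 - p₁ α) = p₁' ^ 2 / (p₁ α * (1 - p₁ α)) := by
    field_simp; ring
  rw [key, one_div_div, mul_pow]
  rw [div_eq_div_iff (by positivity) (by positivity)]
  ring
end

section
/- Let ψ : ℝ → EuclideanSpace ℝ (Fin 2) be a curve of unit vectors (‖ψ(α)‖ = 1 for all α) differentiable at α₀, let (v₁, v₂) be an orthonormal basis of ℝ², and let λ₁ ≠ λ₂ be real numbers. Define p_i(α) = ⟨v_i, ψ(α)⟩², E(α) = λ₁p₁(α) + λ₂p₂(α), and V(α) = λ₁²p₁(α) + λ₂²p₂(α) − E(α)². If p₁(α₀) ≠ 0, p₂(α₀) ≠ 0, and p₁'(α₀) ≠ 0, then V(α₀)/(E'(α₀))² = 1/(4‖ψ'(α₀)‖²), i.e. the observable saturates the quantum Cramér–Rao bound. -/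
/-- Observation 3: for a family of unit vectors in a real two-dimensional space, a
two-outcome observable built on a real orthonormal basis saturates the quantum
Cramér–Rao bound. -/
theorem real_two_dim_saturates_quantum_cramer_rao
    (ψ : ℝ → EuclideanSpace ℝ (Fin 2)) (α₀ : ℝ)
    (ψ' : EuclideanSpace ℝ (Fin 2)) (hψ : HasDerivAt ψ ψ' α₀)
    (hnorm : ∀ α : ℝ, ‖ψ α‖ = 1)
    (b : OrthonormalBasis (Fin 2) ℝ (EuclideanSpace ℝ (Fin 2)))
    (lam₁ lam₂ : ℝ) (hlam : lam₁ ≠ lam₂)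
    (p : Fin 2 → ℝ → ℝ)
    (hp : ∀ (i : Fin 2) (α : ℝ), p i α = (inner ℝ (b i) (ψ α) : ℝ) ^ 2)
    (E V : ℝ → ℝ)
    (hE : ∀ α : ℝ, E α = lam₁ * p 0 α + lam₂ * p 1 α)
    (hV : ∀ α : ℝ, V α = lam₁ ^ 2 * p 0 α + lam₂ ^ 2 * p 1 α - (E α) ^ 2)
    (h0 : p 0 α₀ ≠ 0) (h1 : p 1 α₀ ≠ 0)
    (hp' : deriv (p 0) α₀ ≠ 0) :
    V α₀ / (deriv E α₀) ^ 2 = 1 / (4 * ‖ψ'‖ ^ 2) := by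
  -- coordinates and their derivatives
  set c : Fin 2 → ℝ → ℝ := fun i α => (inner ℝ (b i) (ψ α) : ℝ) with hc
  set d : Fin 2 → ℝ := fun i => (inner ℝ (b i) ψ' : ℝ) with hd
  have hcd : ∀ i : Fin 2, HasDerivAt (c i) (d i) α₀ := fun i =>
    (innerSL ℝ (b i)).hasFDerivAt.comp_hasDerivAt α₀ hψ
  have hpder : ∀ i : Fin 2, HasDerivAt (p i) (2 * c i α₀ * d i) α₀ := by
    intro i
    have := (hcd i).pow 2
    simp only [Nat.cast_ofNat, pow_one] at this
    have heq : p i = fun α => (c i α) ^ 2 := by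
      funext α; rw [hp]
    rw [heq]
    exact this.congr_deriv (by ring)
  -- orthonormal expansion facts
  have hsum : ∀ x : EuclideanSpace ℝ (Fin 2),
      (inner ℝ x x : ℝ) = (inner ℝ (b 0) x : ℝ) ^ 2 + (inner ℝ (b 1) x : ℝ) ^ 2 := by
    intro x
    have := b.sum_inner_mul_inner x x
    rw [Fin.sum_univ_two] at this
    rw [← this]
    rw [real_inner_comm x (b 0), real_inner_comm x (b 1)]
    ring
  have hnorm1 : c 0 α₀ ^ 2 + c 1 α₀ ^ 2 = 1 := by
    have := hsum (ψ α₀)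
    rw [real_inner_self_eq_norm_sq, hnorm α₀] at this
    simpa [hc] using this.symm
  have hpsinorm : ‖ψ'‖ ^ 2 = d 0 ^ 2 + d 1 ^ 2 := by
    have := hsum ψ'
    rw [real_inner_self_eq_norm_sq] at this
    simpa [hd] using this
  -- derivative of the constant norm gives orthogonality
  have horth : c 0 α₀ * d 0 + c 1 α₀ * d 1 = 0 := by
    have hconst : HasDerivAt (fun α => c 0 α ^ 2 + c 1 α ^ 2) 0 α₀ := by
      have : (fun α => c 0 α ^ 2 + c 1 α ^ 2) = fun _ => (1 : ℝ) := by
        funext α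
        have := hsum (ψ α)
        rw [real_inner_self_eq_norm_sq, hnorm α] at this
        simpa [hc] using this.symm
      rw [this]; exact hasDerivAt_const α₀ 1
    have hcomp : HasDerivAt (fun α => c 0 α ^ 2 + c 1 α ^ 2)
        (2 * c 0 α₀ * d 0 + 2 * c 1 α₀ * d 1) α₀ := by
      have h0' := (hcd 0).pow 2
      have h1' := (hcd 1).pow 2
      simp only [Nat.cast_ofNat, pow_one] at h0' h1'
      exact (h0'.add h1').congr_deriv (by ring)
    have := hconst.unique hcomp
    linarith
  -- compute derivatives
  have hEder : HasDerivAt E (lam₁ * (2 * c 0 α₀ * d 0) + lam₂ * (2 * c 1 α₀ * d 1)) α₀ := by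
    have heq : E = fun α => lam₁ * p 0 α + lam₂ * p 1 α := funext hE
    rw [heq]
    exact ((hpder 0).const_mul lam₁).add ((hpder 1).const_mul lam₂)
  have hdE : deriv E α₀ = lam₁ * (2 * c 0 α₀ * d 0) + lam₂ * (2 * c 1 α₀ * d 1) :=
    hEder.deriv
  have hdp0 : deriv (p 0) α₀ = 2 * c 0 α₀ * d 0 := (hpder 0).deriv
  -- nonvanishing facts
  have hc0 : c 0 α₀ ≠ 0 := by
    intro h; apply h0; rw [hp]; simp [hc] at h; simp [h]
  have hc1 : c 1 α₀ ≠ 0 := by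
    intro h; apply h1; rw [hp]; simp [hc] at h; simp [h]
  have hd0 : d 0 ≠ 0 := by
    intro h; apply hp'; rw [hdp0, h]; ring
  -- abbreviations
  set a0 := c 0 α₀
  set a1 := c 1 α₀
  set e0 := d 0
  set e1 := d 1
  have hp0 : p 0 α₀ = a0 ^ 2 := hp 0 α₀
  have hp1 : p 1 α₀ = a1 ^ 2 := hp 1 α₀
  have hV0 : V α₀ = (lam₁ - lam₂) ^ 2 * a0 ^ 2 * a1 ^ 2 := by
    rw [hV, hE, hp0, hp1]
    linear_combination (-(lam₁ ^ 2 * a0 ^ 2 + lam₂ ^ 2 * a1 ^ 2)) * hnorm1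
  have hE2 : (deriv E α₀) ^ 2 = 4 * (lam₁ - lam₂) ^ 2 * a0 ^ 2 * e0 ^ 2 := by
    rw [hdE]
    linear_combination (8 * lam₁ * lam₂ * a0 * e0 + 4 * lam₂ ^ 2 * (a1 * e1 - a0 * e0)) * horth
  rw [hV0, hE2, hpsinorm]
  have hden : 4 * (lam₁ - lam₂) ^ 2 * a0 ^ 2 * e0 ^ 2 ≠ 0 := by
    have : lam₁ - lam₂ ≠ 0 := sub_ne_zero.mpr hlam
    positivity
  have hden2 : 4 * (e0 ^ 2 + e1 ^ 2) ≠ 0 := by positivity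
  rw [div_eq_div_iff hden hden2]
  have key : a1 ^ 2 * (e0 ^ 2 + e1 ^ 2) = e0 ^ 2 := by
    linear_combination e0 ^ 2 * hnorm1 + (a1 * e1 - a0 * e0) * horth
  linear_combination 4 * (lam₁ - lam₂) ^ 2 * a0 ^ 2 * key
end

section
/- Let p, q : Fin N → ℝ be nonnegative with Σ_i p_i = 1 and Σ_i q_i = 1, let α ∈ ℝ, and set w_i = α p_i + (1−α) q_i; assume w_i > 0 for every i. Let I = Σ_i (p_i − q_i)²/w_i and assume I ≠ 0. Define λ̃_i = α + (p_i − q_i)/(I · w_i). Then: (a) Σ_i p_i λ̃_i = 1; (b) Σ_i q_i λ̃_i = 0; (c) Σ_i w_i λ̃_i² − α² = 1/I. -/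
/-- The explicit eigenvalues `λ̃ᵢ = α + (pᵢ − qᵢ)/(I wᵢ)` give an unbiased observable
(`Σ pᵢλ̃ᵢ = 1`, `Σ qᵢλ̃ᵢ = 0`) achieving variance `Σ wᵢλ̃ᵢ² − α² = 1/I`, where
`I` is the classical Fisher information of the measurement. -/
theorem optimal_eigenvalues_feasible_and_achieve_inverse_fisher
    {N : ℕ} (p q : Fin N → ℝ)
    (hp : ∀ i, 0 ≤ p i) (hq : ∀ i, 0 ≤ q i)
    (hps : ∑ i, p i = 1) (hqs : ∑ i, q i = 1)
    (α : ℝ) (w : Fin N → ℝ)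
    (hw : ∀ i, w i = α * p i + (1 - α) * q i)
    (hwpos : ∀ i, 0 < w i)
    (I : ℝ) (hI : I = ∑ i, (p i - q i) ^ 2 / w i) (hI0 : I ≠ 0)
    (lam : Fin N → ℝ)
    (hlam : ∀ i, lam i = α + (p i - q i) / (I * w i)) :
    (∑ i, p i * lam i = 1) ∧ (∑ i, q i * lam i = 0) ∧
      (∑ i, w i * (lam i) ^ 2 - α ^ 2 = 1 / I) := by
  have hwne : ∀ i, w i ≠ 0 := fun i => (hwpos i).ne'
  have hd : ∑ i, (p i - q i) = 0 := by
    rw [Finset.sum_sub_distrib, hps, hqs]; ring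
  have hws : ∑ i, w i = 1 := by
    have : ∑ i, w i = ∑ i, (α * p i + (1 - α) * q i) :=
      Finset.sum_congr rfl fun i _ => hw i
    rw [this, Finset.sum_add_distrib, ← Finset.mul_sum, ← Finset.mul_sum, hps, hqs]; ring
  have h1 : ∑ i, p i * lam i = α * (∑ i, p i) + (1/I) * (∑ i, (p i - q i))
      + ((1-α)/I) * (∑ i, (p i - q i)^2 / w i) := by
    rw [Finset.mul_sum, Finset.mul_sum, Finset.mul_sum, ← Finset.sum_add_distrib,
      ← Finset.sum_add_distrib]
    refine Finset.sum_congr rfl fun i _ => ?_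
    rw [hlam i]
    have h0 : α * p i + (1 - α) * q i ≠ 0 := by rw [← hw i]; exact hwne i
    rw [hw i]
    generalize hW : α * p i + (1 - α) * q i = W at h0 ⊢
    field_simp
    rw [← hW]
    ring
  have h2 : ∑ i, q i * lam i = α * (∑ i, q i) + (1/I) * (∑ i, (p i - q i))
      + ((-α)/I) * (∑ i, (p i - q i)^2 / w i) := by
    rw [Finset.mul_sum, Finset.mul_sum, Finset.mul_sum, ← Finset.sum_add_distrib,
      ← Finset.sum_add_distrib]
    refine Finset.sum_congr rfl fun i _ => ?_
    rw [hlam i]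
    have h0 : α * p i + (1 - α) * q i ≠ 0 := by rw [← hw i]; exact hwne i
    rw [hw i]
    generalize hW : α * p i + (1 - α) * q i = W at h0 ⊢
    field_simp
    rw [← hW]
    ring
  have h3 : ∑ i, w i * (lam i)^2 = α^2 * (∑ i, w i) + (2*α/I) * (∑ i, (p i - q i))
      + (1/I^2) * (∑ i, (p i - q i)^2 / w i) := by
    rw [Finset.mul_sum, Finset.mul_sum, Finset.mul_sum, ← Finset.sum_add_distrib,
      ← Finset.sum_add_distrib]
    refine Finset.sum_congr rfl fun i _ => ?_
    rw [hlam i]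
    have h0 : α * p i + (1 - α) * q i ≠ 0 := by rw [← hw i]; exact hwne i
    rw [hw i]
    field_simp
    ring
  refine ⟨?_, ?_, ?_⟩
  · rw [h1, hps, hd, ← hI]; field_simp; ring
  · rw [h2, hqs, hd, ← hI]; field_simp; ring
  · rw [h3, hws, hd, ← hI]; field_simp; ring
end

section
/- Let ρ be an N×N Hermitian positive semidefinite complex matrix with eigenvalues listed in descending order λ₁↓ ≥ … ≥ λ_N↓. Let Λ : Fin K → Matrix (Fin N) (Fin N) ℂ be a family of pairwise orthogonal orthogonal projectors (Λ_i Hermitian, Λ_i² = Λ_i, Λ_i Λ_j = 0 for i ≠ j, Σ_i Λ_i = 1) each of rank R, with K·R = N. Set p'_i = Tr(Λ_i ρ) (a real number). Then for every k ≤ K, the sum of the k largest values among (p'_i)_{i=1}^K is at most Σ_{j=1}^{kR} λ_j↓, with equality of total sums at k = K; i.e. the vector (p'_i) is majorized by the vector of blockwise sums of the R largest, next R largest, etc., eigenvalues of ρ. -/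
open scoped ComplexOrder
open scoped Matrix


lemma my_trace_eq_sum_eig {n : Type*} [Fintype n] [DecidableEq n]
    {A : Matrix n n ℂ} (hA : A.IsHermitian) :
    A.trace = ∑ i, (hA.eigenvalues i : ℂ) := by
  conv_lhs => rw [hA.spectral_theorem]
  simp only [Unitary.conjStarAlgAut_apply, Unitary.coe_star]
  rw [Matrix.trace_mul_cycle, Unitary.coe_star_mul_self, one_mul, Matrix.trace_diagonal]
  rfl

lemma my_eig_zero_or_one {n : Type*} [Fintype n] [DecidableEq n]
    {A : Matrix n n ℂ} (hA : A.IsHermitian) (hidem : A * A = A) (j : n) :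
    hA.eigenvalues j = 0 ∨ hA.eigenvalues j = 1 := by
  have hD : star (hA.eigenvectorUnitary : Matrix n n ℂ) * A * (hA.eigenvectorUnitary : Matrix n n ℂ) =
      Matrix.diagonal (RCLike.ofReal ∘ hA.eigenvalues) := by
    simpa [Unitary.conjStarAlgAut_apply] using hA.conjStarAlgAut_star_eigenvectorUnitary
  have h2 : Matrix.diagonal ((RCLike.ofReal ∘ hA.eigenvalues) : n → ℂ) *
        Matrix.diagonal ((RCLike.ofReal ∘ hA.eigenvalues) : n → ℂ)
      = Matrix.diagonal ((RCLike.ofReal ∘ hA.eigenvalues) : n → ℂ) := by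
    rw [← hD]
    set V := (hA.eigenvectorUnitary : Matrix n n ℂ) with hV
    have hVs : V * star V = 1 := Matrix.mem_unitaryGroup_iff.mp hA.eigenvectorUnitary.2
    calc (star V * A * V) * (star V * A * V)
        = star V * ((A * (V * star V)) * (A * V)) := by simp only [mul_assoc]
      _ = star V * (A * (A * V)) := by rw [hVs, mul_one]
      _ = star V * ((A * A) * V) := by rw [mul_assoc]
      _ = star V * A * V := by rw [hidem, mul_assoc]
  rw [Matrix.diagonal_mul_diagonal] at h2
  have h3 : ((hA.eigenvalues j : ℂ)) * hA.eigenvalues j = hA.eigenvalues j := by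
    have := congrFun (congrFun h2 j) j
    simpa [Matrix.diagonal_apply_eq] using this
  have h4 : hA.eigenvalues j * hA.eigenvalues j = hA.eigenvalues j := by exact_mod_cast h3
  exact IsIdempotentElem.iff_eq_zero_or_one.mp h4

lemma my_proj_trace {n : Type*} [Fintype n] [DecidableEq n]
    {A : Matrix n n ℂ} (hA : A.IsHermitian) (hidem : A * A = A) :
    A.trace = (A.rank : ℂ) := by
  rw [my_trace_eq_sum_eig hA, hA.rank_eq_card_non_zero_eigs]
  rw [Fintype.card_subtype]
  rw [Finset.card_eq_sum_ones, Nat.cast_sum]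
  rw [Finset.sum_filter]
  apply Finset.sum_congr rfl
  intro j _
  rcases my_eig_zero_or_one hA hidem j with h | h <;> simp [h]

lemma my_diag_nonneg {n : Type*} [Fintype n] [DecidableEq n]
    {M : Matrix n n ℂ} (hM : M.PosSemidef) (j : n) : 0 ≤ M j j := by
  exact hM.diag_nonneg

lemma my_card_filter_lt (N r : ℕ) (h : r ≤ N) :
    (Finset.univ.filter fun j : Fin N => (j : ℕ) < r).card = r := by
  have : (Finset.univ.filter fun j : Fin N => (j : ℕ) < r)
      = Finset.map (Fin.castLEEmb h) Finset.univ := by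
    ext j
    simp only [Finset.mem_filter, Finset.mem_univ, true_and, Finset.mem_map, Fin.castLEEmb_apply]
    constructor
    · intro hj; exact ⟨⟨j, hj⟩, rfl⟩
    · rintro ⟨i, rfl⟩; exact i.2
  rw [this, Finset.card_map, Finset.card_univ, Fintype.card_fin]

lemma my_core_ineq {N : ℕ} (r : ℕ) (hr : r ≤ N) (μ t : Fin N → ℝ)
    (hmono : Antitone μ) (h0 : ∀ j, 0 ≤ t j) (h1 : ∀ j, t j ≤ 1)
    (hsum : ∑ j, t j = r) :
    ∑ j, t j * μ j ≤ ∑ j ∈ Finset.univ.filter (fun j : Fin N => (j : ℕ) < r), μ j := by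
  rcases Nat.eq_zero_or_pos r with rfl | hrpos
  · have ht : ∀ j, t j = 0 := by
      intro j
      have := (Finset.sum_eq_zero_iff_of_nonneg (fun j _ => h0 j)).mp (by simpa using hsum)
      exact this j (Finset.mem_univ j)
    simp [ht]
  · set c : ℝ := μ ⟨r - 1, by omega⟩ with hc
    set F := Finset.univ.filter (fun j : Fin N => (j : ℕ) < r) with hF
    have hcard : F.card = r := my_card_filter_lt N r hr
    have hsplit : ∑ j, t j * μ j = ∑ j ∈ F, t j * μ j + ∑ j ∈ Fᶜ, t j * μ j := by
      rw [Finset.sum_add_sum_compl]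
    have hFle : ∑ j ∈ F, t j * μ j ≤ ∑ j ∈ F, μ j - c * ∑ j ∈ F, (1 - t j) := by
      rw [Finset.mul_sum, ← Finset.sum_sub_distrib]
      apply Finset.sum_le_sum
      intro j hj
      have hjF : (j : ℕ) < r := by simpa [hF] using hj
      have hμj : c ≤ μ j := hmono (by simp [Fin.le_def]; omega)
      nlinarith [h1 j, h0 j]
    have hCle : ∑ j ∈ Fᶜ, t j * μ j ≤ c * ∑ j ∈ Fᶜ, t j := by
      rw [Finset.mul_sum]
      apply Finset.sum_le_sum
      intro j hj
      have hjF : ¬ (j : ℕ) < r := by simpa [hF] using hj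
      have hμj : μ j ≤ c := hmono (by simp [Fin.le_def]; omega)
      nlinarith [h0 j]
    have hsum' : ∑ j ∈ F, (1 - t j) = (r : ℝ) - ∑ j ∈ F, t j := by
      rw [Finset.sum_sub_distrib]
      simp [hcard]
    have htot : ∑ j ∈ F, t j + ∑ j ∈ Fᶜ, t j = (r : ℝ) := by
      rw [Finset.sum_add_sum_compl]; exact hsum
    calc ∑ j, t j * μ j ≤ (∑ j ∈ F, μ j - c * ((r : ℝ) - ∑ j ∈ F, t j)) + c * ∑ j ∈ Fᶜ, t j := by
          rw [hsplit]; rw [← hsum']; exact add_le_add hFle hCle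
      _ = ∑ j ∈ F, μ j + c * (∑ j ∈ F, t j + ∑ j ∈ Fᶜ, t j - r) := by ring
      _ = ∑ j ∈ F, μ j := by rw [htot]; ring

/-- Majorization of measurement outcome distributions: for a Hermitian PSD matrix `ρ` with
eigenvalues `μ` in descending order and a complete family of pairwise orthogonal rank-`R`
projectors `Λ` with `K * R = N`, the outcome distribution `p'ᵢ = Tr(Λᵢ ρ)` is majorized by
the blockwise sums of the `R` largest, next `R` largest, etc., eigenvalues: any `k` of the
`p'ᵢ` sum to at most the `k·R` largest eigenvalues, with equality of total sums. -/
theorem projective_outcomes_majorized_by_eigenvalue_blocks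
    {N K R : ℕ} (hKR : K * R = N)
    (ρ : Matrix (Fin N) (Fin N) ℂ) (hρ : ρ.PosSemidef)
    (μ : Fin N → ℝ) (hmono : Antitone μ)
    (hperm : ∃ σ : Equiv.Perm (Fin N), ∀ i, μ i = hρ.isHermitian.eigenvalues (σ i))
    (Λ : Fin K → Matrix (Fin N) (Fin N) ℂ)
    (hherm : ∀ i, (Λ i).IsHermitian)
    (hidem : ∀ i, Λ i * Λ i = Λ i)
    (horth : ∀ i j, i ≠ j → Λ i * Λ j = 0)
    (hsum : ∑ i, Λ i = 1)
    (hrank : ∀ i, (Λ i).rank = R)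
    (p' : Fin K → ℝ) (hp' : ∀ i, (p' i : ℂ) = (Λ i * ρ).trace) :
    (∀ S : Finset (Fin K),
        ∑ i ∈ S, p' i ≤ ∑ j ∈ Finset.univ.filter (fun j : Fin N => (j : ℕ) < S.card * R), μ j)
      ∧ ∑ i, p' i = ∑ j, μ j := by
  obtain ⟨σ, hσ⟩ := hperm
  set e : Fin N → ℝ := hρ.isHermitian.eigenvalues with he
  set V : Matrix (Fin N) (Fin N) ℂ := (hρ.isHermitian.eigenvectorUnitary : Matrix (Fin N) (Fin N) ℂ) with hV
  have hVs : V * star V = 1 := Matrix.mem_unitaryGroup_iff.mp hρ.isHermitian.eigenvectorUnitary.2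
  have hsV : star V * V = 1 := Matrix.mem_unitaryGroup_iff'.mp hρ.isHermitian.eigenvectorUnitary.2
  have hsum_e_mu : ∑ j, e j = ∑ j, μ j := by
    rw [Finset.sum_congr rfl fun j _ => hσ j]
    exact (Equiv.sum_comp σ e).symm
  -- the main inequality, for each S
  have main : ∀ S : Finset (Fin K),
      ∑ i ∈ S, p' i ≤ ∑ j ∈ Finset.univ.filter (fun j : Fin N => (j : ℕ) < S.card * R), μ j := by
    intro S
    set P : Matrix (Fin N) (Fin N) ℂ := ∑ i ∈ S, Λ i with hP
    have hPherm : P.IsHermitian := by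
      show Pᴴ = P
      rw [hP, Matrix.conjTranspose_sum]
      exact Finset.sum_congr rfl fun i _ => hherm i
    have hPidem : P * P = P := by
      rw [hP, Finset.sum_mul_sum]
      rw [Finset.sum_congr rfl fun i (hi : i ∈ S) =>
        (Finset.sum_eq_single_of_mem i hi (fun j _ hji => horth i j (Ne.symm hji)) : _)]
      exact Finset.sum_congr rfl fun i _ => hidem i
    have htrP : P.trace = ((S.card * R : ℕ) : ℂ) := by
      rw [hP, Matrix.trace_sum]
      rw [Finset.sum_congr rfl fun i _ => my_proj_trace (hherm i) (hidem i)]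
      rw [Finset.sum_congr rfl fun i (_ : i ∈ S) => by rw [hrank i]]
      simp [mul_comm]
    set Q : Matrix (Fin N) (Fin N) ℂ := star V * P * V with hQ
    have hQherm : Q.IsHermitian := by
      show Qᴴ = Q
      rw [hQ]
      simp only [Matrix.conjTranspose_mul, Matrix.conjTranspose_conjTranspose,
        hPherm.eq, mul_assoc]
      simp [Matrix.star_eq_conjTranspose, mul_assoc]
    have hQidem : Q * Q = Q := by
      rw [hQ]
      calc (star V * P * V) * (star V * P * V)
          = star V * ((P * (V * star V)) * (P * V)) := by simp only [mul_assoc]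
        _ = star V * (P * (P * V)) := by rw [hVs, mul_one]
        _ = star V * ((P * P) * V) := by rw [mul_assoc]
        _ = star V * P * V := by rw [hPidem, mul_assoc]
    have hQpsd : Q.PosSemidef := by
      have h1 : Q = Qᴴ * Q := by rw [hQherm.eq, hQidem]
      rw [h1]; exact Matrix.posSemidef_conjTranspose_mul_self Q
    have hQ1psd : (1 - Q).PosSemidef := by
      have hherm1 : (1 - Q).IsHermitian := by
        show (1 - Q)ᴴ = 1 - Q
        rw [Matrix.conjTranspose_sub, Matrix.conjTranspose_one, hQherm.eq]
      have hidem1 : (1 - Q) * (1 - Q) = 1 - Q := by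
        rw [sub_mul, one_mul, mul_sub, mul_one, hQidem]
        abel
      have h1 : (1 - Q) = (1 - Q)ᴴ * (1 - Q) := by rw [hherm1.eq, hidem1]
      rw [h1]; exact Matrix.posSemidef_conjTranspose_mul_self _
    set t : Fin N → ℝ := fun j => (Q j j).re with ht
    have hQjj : ∀ j, Q j j = (t j : ℂ) := by
      intro j
      have h0 := Complex.nonneg_iff.mp (my_diag_nonneg hQpsd j)
      exact Complex.ext rfl h0.2.symm
    have ht0 : ∀ j, 0 ≤ t j := fun j => (Complex.nonneg_iff.mp (my_diag_nonneg hQpsd j)).1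
    have ht1 : ∀ j, t j ≤ 1 := by
      intro j
      have h0 := (Complex.nonneg_iff.mp (my_diag_nonneg hQ1psd j)).1
      simp only [Matrix.sub_apply, Matrix.one_apply_eq, Complex.sub_re, Complex.one_re] at h0
      linarith
    have htrQ : Q.trace = P.trace := by
      rw [hQ, Matrix.trace_mul_cycle, hVs, one_mul]
    have hsum_t : ∑ j, t j = (S.card * R : ℕ) := by
      have h1 : Q.trace = ((∑ j, t j : ℝ) : ℂ) := by
        rw [Matrix.trace]
        push_cast
        exact Finset.sum_congr rfl fun j _ => hQjj j
      rw [htrQ, htrP] at h1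
      exact_mod_cast h1.symm
    have htrace : (P * ρ).trace = ((∑ j, t j * e j : ℝ) : ℂ) := by
      conv_lhs => rw [hρ.isHermitian.spectral_theorem]
      simp only [Unitary.conjStarAlgAut_apply, Unitary.coe_star]
      rw [show P * ((hρ.isHermitian.eigenvectorUnitary : Matrix (Fin N) (Fin N) ℂ) *
            Matrix.diagonal (RCLike.ofReal ∘ hρ.isHermitian.eigenvalues) *
            star (hρ.isHermitian.eigenvectorUnitary : Matrix (Fin N) (Fin N) ℂ))
          = P * (V * Matrix.diagonal (RCLike.ofReal ∘ e)) * star V by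
        rw [hV, he]; simp only [mul_assoc]]
      rw [Matrix.trace_mul_cycle, ← mul_assoc, ← hQ]
      rw [Matrix.trace]
      push_cast
      apply Finset.sum_congr rfl
      intro j _
      rw [Matrix.diag_apply, Matrix.mul_diagonal, hQjj j]
      simp
    have hSsum : ∑ i ∈ S, p' i = ∑ j, t j * e j := by
      have h1 : ((∑ i ∈ S, p' i : ℝ) : ℂ) = (P * ρ).trace := by
        rw [hP, Finset.sum_mul, Matrix.trace_sum]
        push_cast
        exact Finset.sum_congr rfl fun i _ => hp' i
      rw [htrace] at h1
      exact_mod_cast h1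
    rw [hSsum]
    have hperm_sum : ∑ j, t j * e j = ∑ j, (t ∘ σ) j * μ j :=
      calc ∑ j, t j * e j = ∑ j, t (σ j) * e (σ j) :=
            (Equiv.sum_comp σ (fun j => t j * e j)).symm
        _ = ∑ j, (t ∘ σ) j * μ j := Finset.sum_congr rfl fun j _ => by
            rw [Function.comp_apply, hσ j]
    rw [hperm_sum]
    have hr : S.card * R ≤ N := by
      rw [← hKR]
      have : S.card ≤ K := by
        simpa using Finset.card_le_card (Finset.subset_univ S)
      exact Nat.mul_le_mul_right R this
    apply my_core_ineq (S.card * R) hr μ (t ∘ σ) hmono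
      (fun j => ht0 (σ j)) (fun j => ht1 (σ j))
    simp only [Function.comp_apply]
    rw [Equiv.sum_comp σ t, hsum_t]
  refine ⟨main, ?_⟩
  have h1 : ((∑ i, p' i : ℝ) : ℂ) = ρ.trace := by
    push_cast
    rw [Finset.sum_congr rfl fun i (_ : i ∈ Finset.univ) => hp' i, ← Matrix.trace_sum,
      ← Finset.sum_mul, hsum, one_mul]
  rw [my_trace_eq_sum_eig hρ.isHermitian] at h1
  have h2 : (∑ i, p' i : ℝ) = ∑ j, e j := by exact_mod_cast h1
  rw [h2, hsum_e_mu]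
end

section
/- Let n, m be natural numbers with 1 ≤ m ≤ n, set D = 2ⁿ, R = 2^{n−m}, K = 2^m, and q = 2^{−m}. Let ρ be a D×D Hermitian positive semidefinite complex matrix with trace 1, with orthonormal eigenbasis (v_j)_{j=1}^D and eigenvalues μ₁ ≥ μ₂ ≥ … ≥ μ_D in descending order. Define the grouped spectral projectors Λ_k = Σ_{j=(k−1)R+1}^{kR} |v_j⟩⟨v_j| and p_k = Tr(Λ_k ρ) = Σ_{j=(k−1)R+1}^{kR} μ_j. Then for every family Λ' : Fin K → Matrix (Fin D) (Fin D) ℂ of pairwise orthogonal orthogonal projectors of rank R summing to the identity, with p'_k = Tr(Λ'_k ρ), one has Σ_{k=1}^K (p'_k − q)²/(p'_k + q) ≤ Σ_{k=1}^K (p_k − q)²/(p_k + q). -/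
open scoped ComplexOrder
open Finset Matrix

section AuxHelpers


lemma aux_diag_nonneg {N : ℕ} {M : Matrix (Fin N) (Fin N) ℂ} (hM : M.PosSemidef) (j : Fin N) :
    M j j = ((M j j).re : ℂ) ∧ 0 ≤ (M j j).re := by
  have h := hM.diag_nonneg (i := j)
  obtain ⟨h1, h2⟩ := Complex.nonneg_iff.mp h
  exact ⟨Complex.ext rfl h2.symm, h1⟩

lemma aux_trace_idem {N : ℕ} {A : Matrix (Fin N) (Fin N) ℂ} (hA : A.IsHermitian)
    (hi : A * A = A) : A.trace = (A.rank : ℂ) := by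
  classical
  have heig : ∀ j, hA.eigenvalues j = 0 ∨ hA.eigenvalues j = 1 := by
    intro j
    have h1 := hA.mulVec_eigenvectorBasis j
    have h2 : A *ᵥ (A *ᵥ ⇑(hA.eigenvectorBasis j)) =
        (hA.eigenvalues j * hA.eigenvalues j) • ⇑(hA.eigenvectorBasis j) := by
      rw [h1, mulVec_smul, h1, smul_smul]
    rw [mulVec_mulVec, hi, h1] at h2
    have hb : ⇑(hA.eigenvectorBasis j) ≠ 0 := by
      intro h
      have := hA.eigenvectorBasis.orthonormal.1 j
      rw [show (hA.eigenvectorBasis j) = 0 from PiLp.ext (congrFun h)] at this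
      simp at this
    obtain ⟨i, hi'⟩ := Function.ne_iff.mp hb
    have hc : (hA.eigenvalues j : ℂ) * (hA.eigenvectorBasis j) i
        = ((hA.eigenvalues j * hA.eigenvalues j : ℝ) : ℂ) * (hA.eigenvectorBasis j) i := by
      simpa [Complex.real_smul] using congrFun h2 i
    have hμ : hA.eigenvalues j = hA.eigenvalues j * hA.eigenvalues j := by
      exact_mod_cast mul_right_cancel₀ hi' hc
    rcases mul_eq_zero.mp (show hA.eigenvalues j * (hA.eigenvalues j - 1) = 0 by nlinarith) with h | h
    · exact Or.inl h
    · exact Or.inr (by linarith)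
  have ht : A.trace = ∑ j, (hA.eigenvalues j : ℂ) := by
    exact hA.trace_eq_sum_eigenvalues
  rw [ht, hA.rank_eq_card_non_zero_eigs]
  rw [Fintype.card_subtype]
  rw [← Finset.sum_boole]
  push_cast
  refine Finset.sum_congr rfl fun j _ => ?_
  rcases heig j with h | h <;> simp [h]

lemma aux_card_lt {N j : ℕ} (hj : j ≤ N) :
    (Finset.univ.filter fun i : Fin N => (i : ℕ) < j).card = j := by
  have : (Finset.univ.filter fun i : Fin N => (i : ℕ) < j)
      = Finset.map (Fin.castLEEmb hj) Finset.univ := by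
    ext i
    simp only [mem_filter, mem_univ, true_and, mem_map]
    constructor
    · intro h; exact ⟨⟨i, h⟩, by simp [Fin.castLEEmb, Fin.ext_iff]⟩
    · rintro ⟨k, -, rfl⟩; simpa using k.isLt
  rw [this, Finset.card_map, Finset.card_univ, Fintype.card_fin]

lemma aux_kyfan {N : ℕ} (μ : Fin N → ℝ) (hmono : Antitone μ) (hpos : ∀ j, 0 ≤ μ j)
    (T : Fin N → ℝ) (h0 : ∀ j, 0 ≤ T j) (h1 : ∀ j, T j ≤ 1) (r : ℕ)
    (hr : ∑ j, T j = (r : ℝ)) :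
    ∑ j, μ j * T j ≤ ∑ j ∈ Finset.univ.filter (fun j : Fin N => (j : ℕ) < r), μ j := by
  by_cases hrN : r < N
  · set c := μ ⟨r, hrN⟩ with hc
    have key : ∀ j, μ j * T j ≤ (if (j : ℕ) < r then μ j - c else 0) + c * T j := by
      intro j
      by_cases hj : (j : ℕ) < r
      · have hcj : c ≤ μ j := hmono (by exact_mod_cast hj.le)
        have : (μ j - c) * T j ≤ (μ j - c) * 1 :=
          mul_le_mul_of_nonneg_left (h1 j) (by linarith)
        simp only [hj, if_pos]
        nlinarith
      · have hcj : μ j ≤ c := hmono (by rw [Fin.le_def]; exact not_lt.mp hj)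
        have : (μ j - c) * T j ≤ 0 := mul_nonpos_of_nonpos_of_nonneg (by linarith) (h0 j)
        simp only [hj, if_neg, not_false_iff]
        nlinarith
    calc ∑ j, μ j * T j ≤ ∑ j : Fin N, ((if (j : ℕ) < r then μ j - c else 0) + c * T j) :=
          Finset.sum_le_sum fun j _ => key j
      _ = (∑ j ∈ Finset.univ.filter (fun j : Fin N => (j : ℕ) < r), (μ j - c)) + c * r := by
          rw [Finset.sum_add_distrib, Finset.sum_ite, Finset.sum_const_zero, add_zero,
            ← Finset.mul_sum, hr]
      _ = ∑ j ∈ Finset.univ.filter (fun j : Fin N => (j : ℕ) < r), μ j := by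
          rw [Finset.sum_sub_distrib, Finset.sum_const, aux_card_lt hrN.le]
          push_cast; ring
  · have hfil : Finset.univ.filter (fun j : Fin N => (j : ℕ) < r) = Finset.univ := by
      ext j; simp only [mem_filter, mem_univ, true_and, iff_true]
      exact lt_of_lt_of_le j.isLt (not_lt.mp hrN)
    rw [hfil]
    exact Finset.sum_le_sum fun j _ => by
      have := mul_le_mul_of_nonneg_left (h1 j) (hpos j); simpa using this

lemma aux_abel (K : ℕ) (c d : ℕ → ℝ) (hc : ∀ i, c (i + 1) ≤ c i)
    (hD : ∀ j, 0 ≤ ∑ i ∈ range j, d i) (hK : ∑ i ∈ range K, d i = 0) :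
    0 ≤ ∑ i ∈ range K, c i * d i := by
  have := Finset.sum_range_by_parts (f := c) (g := d) K
  simp only [smul_eq_mul] at this
  rw [this, hK, mul_zero, zero_sub, neg_nonneg]
  apply Finset.sum_nonpos
  intro i _
  exact mul_nonpos_of_nonpos_of_nonneg (by linarith [hc i]) (hD (i + 1))

lemma aux_conv {A B : ℝ} (hA : 0 < A) (hB : 0 < B) :
    1 / A ≤ 1 / B + (B - A) / A ^ 2 := by
  have h2 : (0:ℝ) < A ^ 2 := pow_pos hA 2
  rw [div_add_div _ _ (ne_of_gt hB) (ne_of_gt h2), div_le_div_iff₀ hA (by positivity)]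
  nlinarith [sq_nonneg (A - B), mul_pos hA hB]

lemma aux_hlp (K : ℕ) (q : ℝ) (hq : 0 < q) (x y : ℕ → ℝ)
    (hx0 : ∀ i, 0 ≤ x i) (hy0 : ∀ i, 0 ≤ y i)
    (hxa : ∀ i, x (i + 1) ≤ x i)
    (hmaj : ∀ j, ∑ i ∈ range j, x i ≤ ∑ i ∈ range j, y i)
    (heq : ∑ i ∈ range K, x i = ∑ i ∈ range K, y i) :
    ∑ i ∈ range K, 1 / (x i + q) ≤ ∑ i ∈ range K, 1 / (y i + q) := by
  have hX : ∀ i, 0 < x i + q := fun i => by linarith [hx0 i]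
  have hY : ∀ i, 0 < y i + q := fun i => by linarith [hy0 i]
  have habel : 0 ≤ ∑ i ∈ range K, (-(1 / (x i + q) ^ 2)) * (y i - x i) := by
    apply aux_abel
    · intro i
      have hxx : x (i + 1) + q ≤ x i + q := by linarith [hxa i]
      have h1 : (x (i+1) + q) ^ 2 ≤ (x i + q) ^ 2 := by nlinarith [hX (i+1), hX i]
      have := one_div_le_one_div_of_le (pow_pos (hX (i+1)) 2) h1
      linarith
    · intro j
      have := hmaj j
      rw [Finset.sum_sub_distrib]
      linarith
    · rw [Finset.sum_sub_distrib]
      linarith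
  calc ∑ i ∈ range K, 1 / (x i + q)
      ≤ ∑ i ∈ range K, (1 / (y i + q) + (y i - x i) / (x i + q) ^ 2) := by
        apply Finset.sum_le_sum
        intro i _
        have := aux_conv (hX i) (hY i)
        have hBA : y i + q - (x i + q) = y i - x i := by ring
        rw [hBA] at this
        exact this
    _ = ∑ i ∈ range K, 1 / (y i + q) + ∑ i ∈ range K, (y i - x i) / (x i + q) ^ 2 := by
        rw [Finset.sum_add_distrib]
    _ ≤ ∑ i ∈ range K, 1 / (y i + q) := by
        have : ∑ i ∈ range K, (y i - x i) / (x i + q) ^ 2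
            = -∑ i ∈ range K, (-(1 / (x i + q) ^ 2)) * (y i - x i) := by
          rw [← Finset.sum_neg_distrib]
          refine Finset.sum_congr rfl fun i _ => ?_
          field_simp
        rw [this]
        linarith

lemma aux_sum_range_eq {N : ℕ} (f : Fin N → ℝ) (j : ℕ) (hj : j ≤ N) :
    ∑ i ∈ Finset.range j, (if h : i < N then f ⟨i, h⟩ else 0)
      = ∑ k ∈ Finset.univ.filter (fun k : Fin N => (k : ℕ) < j), f k := by
  refine Finset.sum_bij' (fun i hi => (⟨i, lt_of_lt_of_le (Finset.mem_range.mp hi) hj⟩ : Fin N))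
    (fun k _ => (k : ℕ)) ?_ ?_ ?_ ?_ ?_
  · intro i hi; simp [Finset.mem_range.mp hi]
  · intro k hk; simp only [Finset.mem_filter] at hk; simpa using hk.2
  · intro i hi; rfl
  · intro k hk; rfl
  · intro i hi; simp [lt_of_lt_of_le (Finset.mem_range.mp hi) hj]

end AuxHelpers

section MainProof

/-- The f-divergence `Σ (p'ₖ − q)²/(p'ₖ + q)` (with `q = 2^{−m}`) over complete families of
pairwise orthogonal rank-`2^{n−m}` projectors is maximized by the projectors grouped from the
eigenvectors of `ρ` sorted in descending order of eigenvalues. -/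
theorem f_divergence_maximized_on_grouped_spectral_projectors
    {n m : ℕ} (hm : 1 ≤ m) (hmn : m ≤ n)
    (ρ : Matrix (Fin (2 ^ n)) (Fin (2 ^ n)) ℂ) (hρ : ρ.PosSemidef)
    (htr : ρ.trace = 1)
    (v : Fin (2 ^ n) → EuclideanSpace ℂ (Fin (2 ^ n))) (hv : Orthonormal ℂ v)
    (μ : Fin (2 ^ n) → ℝ) (hmono : Antitone μ)
    (heig : ∀ j, Matrix.toEuclideanLin ρ (v j) = (μ j : ℂ) • v j)
    (q : ℝ) (hq : q = 1 / 2 ^ m)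
    (p : Fin (2 ^ m) → ℝ)
    (hp : ∀ k : Fin (2 ^ m),
      p k = ∑ j ∈ Finset.univ.filter
        (fun j : Fin (2 ^ n) =>
          (k : ℕ) * 2 ^ (n - m) ≤ (j : ℕ) ∧ (j : ℕ) < ((k : ℕ) + 1) * 2 ^ (n - m)), μ j)
    (Λ' : Fin (2 ^ m) → Matrix (Fin (2 ^ n)) (Fin (2 ^ n)) ℂ)
    (hherm : ∀ k, (Λ' k).IsHermitian)
    (hidem : ∀ k, Λ' k * Λ' k = Λ' k)
    (horth : ∀ k l, k ≠ l → Λ' k * Λ' l = 0)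
    (hsum : ∑ k, Λ' k = 1)
    (hrank : ∀ k, (Λ' k).rank = 2 ^ (n - m))
    (p' : Fin (2 ^ m) → ℝ) (hp' : ∀ k, (p' k : ℂ) = (Λ' k * ρ).trace) :
    ∑ k : Fin (2 ^ m), (p' k - q) ^ 2 / (p' k + q)
      ≤ ∑ k : Fin (2 ^ m), (p k - q) ^ 2 / (p k + q) := by
  classical
  set U : Matrix (Fin (2 ^ n)) (Fin (2 ^ n)) ℂ := Matrix.of fun i j => v j i with hU
  have hUU : Uᴴ * U = 1 := by
    ext j k
    have hinner := orthonormal_iff_ite.mp hv j k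
    rw [PiLp.inner_apply] at hinner
    simp only [Matrix.mul_apply, Matrix.conjTranspose_apply, hU, Matrix.of_apply,
      Matrix.one_apply]
    rw [← hinner]
    exact Finset.sum_congr rfl fun i _ => by simp [RCLike.inner_apply, mul_comm]
  have hUUc : U * Uᴴ = 1 := mul_eq_one_comm.mp hUU
  have hρU : ρ * U = U * Matrix.diagonal (fun j => (μ j : ℂ)) := by
    ext i j
    have h : ρ *ᵥ (v j : Fin (2 ^ n) → ℂ) = (μ j : ℂ) • (v j : Fin (2 ^ n) → ℂ) := by
      have h' := congrArg WithLp.ofLp (heig j)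
      simpa [Matrix.toEuclideanLin_apply] using h'
    have h2 := congrFun h i
    have hL : (ρ * U) i j = (ρ *ᵥ (v j : Fin (2 ^ n) → ℂ)) i := by
      simp [Matrix.mul_apply, hU, Matrix.mulVec, dotProduct]
    have hR : (U * Matrix.diagonal (fun j => (μ j : ℂ))) i j = v j i * (μ j : ℂ) := by
      simp [Matrix.mul_diagonal, hU]
    rw [hL, hR, h2]
    show ((μ j : ℂ) • v j) i = _
    simp only [PiLp.smul_apply, smul_eq_mul]
    ring
  -- positivity of eigenvalues and trace identity
  have hdiagρ : Matrix.diagonal (fun j => (μ j : ℂ)) = Uᴴ * ρ * U := by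
    rw [Matrix.mul_assoc, hρU, ← Matrix.mul_assoc, hUU, Matrix.one_mul]
  have hμ0 : ∀ j, 0 ≤ μ j := by
    intro j
    have hd := aux_diag_nonneg (hρ.conjTranspose_mul_mul_same U) j
    rw [← hdiagρ] at hd
    simp only [Matrix.diagonal_apply_eq] at hd
    have : μ j = ((μ j : ℂ)).re := by simp
    rw [this]
    exact hd.2
  have htrμ : ∑ j, μ j = 1 := by
    have h1 : (Uᴴ * ρ * U).trace = 1 := by
      rw [Matrix.trace_mul_cycle, hUUc, Matrix.one_mul, htr]
    rw [← hdiagρ, Matrix.trace_diagonal] at h1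
    exact_mod_cast h1
  -- the projector machinery
  have hpsd : ∀ k, (Λ' k).PosSemidef := by
    intro k
    have h := Matrix.posSemidef_conjTranspose_mul_self (Λ' k)
    rw [hherm k, hidem k] at h
    exact h
  set M : Fin (2 ^ m) → Matrix (Fin (2 ^ n)) (Fin (2 ^ n)) ℂ :=
    fun k => Uᴴ * Λ' k * U with hM
  have hMpsd : ∀ k, (M k).PosSemidef := fun k => (hpsd k).conjTranspose_mul_mul_same U
  set t : Fin (2 ^ m) → Fin (2 ^ n) → ℝ := fun k j => (M k j j).re with ht
  have ht0 : ∀ k j, 0 ≤ t k j := fun k j => (aux_diag_nonneg (hMpsd k) j).2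
  have htc : ∀ k j, M k j j = ((t k j : ℝ) : ℂ) := fun k j => (aux_diag_nonneg (hMpsd k) j).1
  have hsum_k : ∀ j, ∑ k, t k j = 1 := by
    intro j
    have h1 : ∑ k, M k = 1 := by
      simp only [hM]
      rw [← Finset.sum_mul, ← Finset.mul_sum, hsum, Matrix.mul_one, hUU]
    have h2 : ∑ k, M k j j = 1 := by
      rw [← Matrix.sum_apply j j Finset.univ M, h1, Matrix.one_apply_eq]
    rw [show (∑ k, M k j j) = ((∑ k, t k j : ℝ) : ℂ) by push_cast [← htc]; rfl] at h2
    exact_mod_cast h2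
  have ht1 : ∀ k j, t k j ≤ 1 := by
    intro k j
    have h := hsum_k j
    have h2 : t k j ≤ ∑ l, t l j :=
      Finset.single_le_sum (fun l _ => ht0 l j) (Finset.mem_univ k)
    linarith
  have hsum_j : ∀ k, ∑ j, t k j = ((2 ^ (n - m) : ℕ) : ℝ) := by
    intro k
    have h1 : (M k).trace = ((2 ^ (n - m) : ℕ) : ℂ) := by
      rw [hM]
      rw [Matrix.trace_mul_cycle, hUUc, Matrix.one_mul]
      rw [aux_trace_idem (hherm k) (hidem k), hrank k]
    rw [Matrix.trace] at h1
    rw [show (∑ j, (M k).diag j) = ((∑ j, t k j : ℝ) : ℂ) by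
      push_cast; exact Finset.sum_congr rfl fun j _ => htc k j] at h1
    exact_mod_cast h1
  have hp'r : ∀ k, p' k = ∑ j, μ j * t k j := by
    intro k
    have h1 : (Λ' k * ρ).trace = (Uᴴ * (Λ' k * ρ) * U).trace := by
      rw [Matrix.trace_mul_cycle, hUUc, Matrix.one_mul]
    have h2 : Uᴴ * (Λ' k * ρ) * U = M k * Matrix.diagonal (fun j => (μ j : ℂ)) := by
      rw [hM]
      rw [Matrix.mul_assoc (Uᴴ * Λ' k) U _, ← hρU]
      rw [Matrix.mul_assoc, Matrix.mul_assoc, Matrix.mul_assoc]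
    have h3 : (M k * Matrix.diagonal (fun j => (μ j : ℂ))).trace
        = ((∑ j, μ j * t k j : ℝ) : ℂ) := by
      rw [Matrix.trace]
      push_cast
      refine Finset.sum_congr rfl fun j _ => ?_
      show (M k * Matrix.diagonal (fun j => (μ j : ℂ))) j j = _
      rw [Matrix.mul_diagonal, htc k j]
      push_cast
      ring
    have := hp' k
    rw [h1, h2, h3] at this
    exact_mod_cast this
  have hp'0 : ∀ k, 0 ≤ p' k := by
    intro k
    rw [hp'r k]
    exact Finset.sum_nonneg fun j _ => mul_nonneg (hμ0 j) (ht0 k j)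
  -- Ky Fan inequality for arbitrary subsets of projectors
  have hKyFan : ∀ S : Finset (Fin (2 ^ m)), ∑ k ∈ S, p' k
      ≤ ∑ j ∈ Finset.univ.filter (fun j : Fin (2 ^ n) => (j : ℕ) < S.card * 2 ^ (n - m)), μ j := by
    intro S
    have hT0 : ∀ j, 0 ≤ ∑ k ∈ S, t k j := fun j => Finset.sum_nonneg fun k _ => ht0 k j
    have hT1 : ∀ j, ∑ k ∈ S, t k j ≤ 1 := by
      intro j
      have := Finset.sum_le_sum_of_subset_of_nonneg (Finset.subset_univ S)
        (fun k _ _ => ht0 k j)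
      rw [hsum_k j] at this
      exact this
    have hTr : ∑ j, ∑ k ∈ S, t k j = ((S.card * 2 ^ (n - m) : ℕ) : ℝ) := by
      rw [Finset.sum_comm]
      rw [Finset.sum_congr rfl fun k _ => hsum_j k]
      rw [Finset.sum_const, nsmul_eq_mul]
      push_cast
      ring
    have h1 : ∑ k ∈ S, p' k = ∑ j, μ j * (∑ k ∈ S, t k j) := by
      rw [Finset.sum_congr rfl fun k _ => hp'r k, Finset.sum_comm]
      exact Finset.sum_congr rfl fun j _ => by rw [Finset.mul_sum]
    rw [h1]
    exact aux_kyfan μ hmono hμ0 _ hT0 hT1 _ hTr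
  -- block partial sums of p equal partial sums of μ
  have hblock : ∀ j : ℕ, j ≤ 2 ^ m →
      ∑ k ∈ Finset.univ.filter (fun k : Fin (2 ^ m) => (k : ℕ) < j), p k
        = ∑ i ∈ Finset.univ.filter (fun i : Fin (2 ^ n) => (i : ℕ) < j * 2 ^ (n - m)), μ i := by
    intro j hj
    induction j with
    | zero => simp
    | succ j ih =>
      have hjlt : j < 2 ^ m := Nat.lt_of_succ_le hj
      have hstep : Finset.univ.filter (fun k : Fin (2 ^ m) => (k : ℕ) < j + 1)
          = insert (⟨j, hjlt⟩ : Fin (2 ^ m))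
              (Finset.univ.filter (fun k : Fin (2 ^ m) => (k : ℕ) < j)) := by
        ext k
        simp only [Finset.mem_filter, Finset.mem_univ, true_and, Finset.mem_insert, Fin.ext_iff]
        omega
      rw [hstep, Finset.sum_insert (by simp), ih hjlt.le, hp ⟨j, hjlt⟩]
      have hsplit : Finset.univ.filter (fun i : Fin (2 ^ n) => (i : ℕ) < (j + 1) * 2 ^ (n - m))
          = (Finset.univ.filter (fun i : Fin (2 ^ n) =>
              j * 2 ^ (n - m) ≤ (i : ℕ) ∧ (i : ℕ) < (j + 1) * 2 ^ (n - m)))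
            ∪ (Finset.univ.filter (fun i : Fin (2 ^ n) => (i : ℕ) < j * 2 ^ (n - m))) := by
        ext i
        simp only [Finset.mem_filter, Finset.mem_univ, true_and, Finset.mem_union]
        have : j * 2 ^ (n - m) ≤ (j + 1) * 2 ^ (n - m) := by
          exact Nat.mul_le_mul_right _ (Nat.le_succ j)
        omega
      have hdis : Disjoint
          (Finset.univ.filter (fun i : Fin (2 ^ n) =>
            j * 2 ^ (n - m) ≤ (i : ℕ) ∧ (i : ℕ) < (j + 1) * 2 ^ (n - m)))
          (Finset.univ.filter (fun i : Fin (2 ^ n) => (i : ℕ) < j * 2 ^ (n - m))) := by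
        rw [Finset.disjoint_left]
        intro i hi1 hi2
        simp only [Finset.mem_filter, Finset.mem_univ, true_and] at hi1 hi2
        omega
      rw [hsplit, Finset.sum_union hdis]
  have hKR : 2 ^ m * 2 ^ (n - m) = 2 ^ n := by
    rw [← pow_add]
    congr 1
    omega
  have hsum_p : ∑ k, p k = 1 := by
    have h := hblock (2 ^ m) le_rfl
    rw [hKR] at h
    have h1 : Finset.univ.filter (fun k : Fin (2 ^ m) => (k : ℕ) < 2 ^ m) = Finset.univ := by
      ext k; simp [k.isLt]
    have h2 : Finset.univ.filter (fun i : Fin (2 ^ n) => (i : ℕ) < 2 ^ n) = Finset.univ := by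
      ext i; simp [i.isLt]
    rw [h1, h2] at h
    rw [h, htrμ]
  have hsum_p' : ∑ k, p' k = 1 := by
    have h1 : ((∑ k, p' k : ℝ) : ℂ) = ∑ k, ((p' k : ℝ) : ℂ) := by push_cast; rfl
    have h2 : ∑ k, ((p' k : ℝ) : ℂ) = ((∑ k, Λ' k) * ρ).trace := by
      rw [Finset.sum_congr rfl fun k _ => hp' k, Finset.sum_mul, Matrix.trace_sum]
    rw [hsum, Matrix.one_mul, htr] at h2
    have := h1.trans h2
    exact_mod_cast this
  -- sorting p' in descending order
  set σ : Equiv.Perm (Fin (2 ^ m)) := Tuple.sort (fun k => -p' k) with hσ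
  have hxa : ∀ a b : Fin (2 ^ m), a ≤ b → p' (σ b) ≤ p' (σ a) := by
    intro a b hab
    have h := Tuple.monotone_sort (fun k => -p' k) hab
    simp only [Function.comp_apply, neg_le_neg_iff] at h
    linarith [h]
  set X : ℕ → ℝ := fun i => if h : i < 2 ^ m then p' (σ ⟨i, h⟩) else 0 with hX
  set Y : ℕ → ℝ := fun i => if h : i < 2 ^ m then p ⟨i, h⟩ else 0 with hY
  have hq0 : 0 < q := by rw [hq]; positivity
  have hp0 : ∀ k, 0 ≤ p k := by
    intro k
    rw [hp k]
    exact Finset.sum_nonneg fun i _ => hμ0 i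
  -- the majorization partial sums
  have hXsum : ∀ j : ℕ, j ≤ 2 ^ m → ∑ i ∈ Finset.range j, X i
      = ∑ k ∈ (Finset.univ.filter (fun k : Fin (2 ^ m) => (k : ℕ) < j)).image σ, p' k := by
    intro j hj
    rw [hX]
    rw [aux_sum_range_eq (fun k => p' (σ k)) j hj]
    rw [Finset.sum_image (fun a _ b _ h => σ.injective h)]
  have hmaj : ∀ j : ℕ, j ≤ 2 ^ m →
      ∑ i ∈ Finset.range j, X i ≤ ∑ i ∈ Finset.range j, Y i := by
    intro j hj
    rw [hXsum j hj]
    have hcard : ((Finset.univ.filter (fun k : Fin (2 ^ m) => (k : ℕ) < j)).image σ).card = j := by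
      rw [Finset.card_image_of_injective _ σ.injective, aux_card_lt hj]
    have h1 := hKyFan ((Finset.univ.filter (fun k : Fin (2 ^ m) => (k : ℕ) < j)).image σ)
    rw [hcard] at h1
    rw [hY, aux_sum_range_eq p j hj, hblock j hj]
    exact h1
  have heqK : ∑ i ∈ Finset.range (2 ^ m), X i = ∑ i ∈ Finset.range (2 ^ m), Y i := by
    have h1 : ∑ i ∈ Finset.range (2 ^ m), X i = ∑ k, p' (σ k) := by
      rw [hXsum (2 ^ m) le_rfl]
      have : Finset.univ.filter (fun k : Fin (2 ^ m) => (k : ℕ) < 2 ^ m) = Finset.univ := by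
        ext k; simp [k.isLt]
      rw [this]
      rw [Finset.image_univ_equiv σ]
      exact (Equiv.sum_comp σ p').symm
    rw [h1, Equiv.sum_comp σ p', hsum_p']
    rw [hY]
    rw [aux_sum_range_eq p (2 ^ m) le_rfl]
    have : Finset.univ.filter (fun k : Fin (2 ^ m) => (k : ℕ) < 2 ^ m) = Finset.univ := by
      ext k; simp [k.isLt]
    rw [this, hsum_p]
  -- apply the HLP-style inequality
  have hlp : ∑ i ∈ Finset.range (2 ^ m), 1 / (X i + q)
      ≤ ∑ i ∈ Finset.range (2 ^ m), 1 / (Y i + q) := by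
    apply aux_hlp (2 ^ m) q hq0 X Y
    · intro i
      rw [hX]
      by_cases h : i < 2 ^ m
      · simp only [h, dif_pos]; exact hp'0 _
      · simp [h]
    · intro i
      rw [hY]
      by_cases h : i < 2 ^ m
      · simp only [h, dif_pos]; exact hp0 _
      · simp [h]
    · intro i
      rw [hX]
      by_cases h1 : i + 1 < 2 ^ m
      · have h0 : i < 2 ^ m := Nat.lt_of_succ_lt h1
        simp only [h1, h0, dif_pos]
        exact hxa ⟨i, h0⟩ ⟨i + 1, h1⟩ (by simp [Fin.le_def])
      · by_cases h0 : i < 2 ^ m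
        · simp only [h1, h0, dif_pos, dif_neg, not_false_iff]
          exact hp'0 _
        · simp [h1, h0]
    · intro j
      by_cases hj : j ≤ 2 ^ m
      · exact hmaj j hj
      · have hXj : ∑ i ∈ Finset.range j, X i = ∑ i ∈ Finset.range (2 ^ m), X i := by
          refine (Finset.sum_subset (Finset.range_subset_range.mpr (le_of_not_ge hj)) ?_).symm
          intro i _ hi
          rw [hX]
          simp only [Finset.mem_range, not_lt] at hi
          simp [Nat.not_lt.mpr hi]
        have hYj : ∑ i ∈ Finset.range j, Y i = ∑ i ∈ Finset.range (2 ^ m), Y i := by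
          refine (Finset.sum_subset (Finset.range_subset_range.mpr (le_of_not_ge hj)) ?_).symm
          intro i _ hi
          rw [hY]
          simp only [Finset.mem_range, not_lt] at hi
          simp [Nat.not_lt.mpr hi]
        rw [hXj, hYj, heqK]
    · exact heqK
  -- identify the sums with sums over Fin (2 ^ m)
  have hXfin : ∑ i ∈ Finset.range (2 ^ m), 1 / (X i + q)
      = ∑ k : Fin (2 ^ m), 1 / (p' k + q) := by
    rw [← Fin.sum_univ_eq_sum_range (fun i => 1 / (X i + q)) (2 ^ m)]
    rw [show (∑ k : Fin (2 ^ m), 1 / (X (k : ℕ) + q)) = ∑ k : Fin (2 ^ m), 1 / (p' (σ k) + q) by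
      refine Finset.sum_congr rfl fun k _ => ?_
      rw [hX]
      simp [k.isLt]]
    exact Equiv.sum_comp σ (fun k => 1 / (p' k + q))
  have hYfin : ∑ i ∈ Finset.range (2 ^ m), 1 / (Y i + q)
      = ∑ k : Fin (2 ^ m), 1 / (p k + q) := by
    rw [← Fin.sum_univ_eq_sum_range (fun i => 1 / (Y i + q)) (2 ^ m)]
    refine Finset.sum_congr rfl fun k _ => ?_
    rw [hY]
    simp [k.isLt]
  have hfinal : ∑ k : Fin (2 ^ m), 1 / (p' k + q) ≤ ∑ k : Fin (2 ^ m), 1 / (p k + q) := by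
    rw [← hXfin, ← hYfin]; exact hlp
  -- final algebraic identity
  have hfid : ∀ a : ℝ, 0 ≤ a → (a - q) ^ 2 / (a + q) = a - 3 * q + 4 * q ^ 2 * (1 / (a + q)) := by
    intro a ha
    have haq : a + q ≠ 0 := by positivity
    field_simp
    ring
  calc ∑ k : Fin (2 ^ m), (p' k - q) ^ 2 / (p' k + q)
      = ∑ k : Fin (2 ^ m), (p' k - 3 * q + 4 * q ^ 2 * (1 / (p' k + q))) :=
        Finset.sum_congr rfl fun k _ => hfid (p' k) (hp'0 k)
    _ = 1 - 2 ^ m * (3 * q) + 4 * q ^ 2 * ∑ k : Fin (2 ^ m), 1 / (p' k + q) := by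
        rw [Finset.sum_add_distrib, Finset.sum_sub_distrib, hsum_p', Finset.sum_const,
          ← Finset.mul_sum]
        simp [nsmul_eq_mul]
    _ ≤ 1 - 2 ^ m * (3 * q) + 4 * q ^ 2 * ∑ k : Fin (2 ^ m), 1 / (p k + q) := by
        have h4 : (0:ℝ) ≤ 4 * q ^ 2 := by positivity
        nlinarith [mul_le_mul_of_nonneg_left hfinal h4]
    _ = ∑ k : Fin (2 ^ m), (p k - 3 * q + 4 * q ^ 2 * (1 / (p k + q))) := by
        rw [Finset.sum_add_distrib, Finset.sum_sub_distrib, hsum_p, Finset.sum_const,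
          ← Finset.mul_sum]
        simp [nsmul_eq_mul]
    _ = ∑ k : Fin (2 ^ m), (p k - q) ^ 2 / (p k + q) :=
        (Finset.sum_congr rfl fun k _ => hfid (p k) (hp0 k)).symm

end MainProof
end

section
/- Let ρ⁽¹⁾, ρ⁽²⁾ be D×D Hermitian complex matrices, α, μ ∈ ℝ, and ρ_α = α·ρ⁽¹⁾ + (1−α)·ρ⁽²⁾. Let M be a Hermitian matrix with spectral decomposition M = Σ_{i=1}^K λ_i Λ_i, where the Λ_i are pairwise orthogonal orthogonal projectors with Σ_i Λ_i = 1 and λ_i ∈ ℝ. Suppose ρ_α M + M ρ_α = 2α ρ_α − μ (ρ⁽¹⁾ − ρ⁽²⁾). Then for every i such that α p_i⁽¹⁾ + (1−α) p_i⁽²⁾ ≠ 0, where p_i⁽ᵃ⁾ = Tr(Λ_i ρ⁽ᵃ⁾) (real numbers), one has λ_i = α − μ (p_i⁽¹⁾ − p_i⁽²⁾) / ( 2 (α p_i⁽¹⁾ + (1−α) p_i⁽²⁾) ). -/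
/-- Eq. (x_expr): the eigenvalues of an observable satisfying the Lagrange optimality
equation `ρ_α M + M ρ_α = 2α ρ_α − μ (ρ⁽¹⁾ − ρ⁽²⁾)` are
`λᵢ = α − μ (pᵢ⁽¹⁾ − pᵢ⁽²⁾)/(2(α pᵢ⁽¹⁾ + (1−α) pᵢ⁽²⁾))`. -/
theorem eigenvalues_of_optimality_equation
    {D K : ℕ} (ρ₁ ρ₂ : Matrix (Fin D) (Fin D) ℂ)
    (h₁ : ρ₁.IsHermitian) (h₂ : ρ₂.IsHermitian)
    (α μ : ℝ) (ρα : Matrix (Fin D) (Fin D) ℂ)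
    (hρα : ρα = (α : ℂ) • ρ₁ + ((1 - α : ℝ) : ℂ) • ρ₂)
    (lam : Fin K → ℝ) (Λ : Fin K → Matrix (Fin D) (Fin D) ℂ)
    (hherm : ∀ i, (Λ i).IsHermitian)
    (hidem : ∀ i, Λ i * Λ i = Λ i)
    (horth : ∀ i j, i ≠ j → Λ i * Λ j = 0)
    (hsum : ∑ i, Λ i = 1)
    (M : Matrix (Fin D) (Fin D) ℂ) (hM : M = ∑ i, (lam i : ℂ) • Λ i)
    (heq : ρα * M + M * ρα = ((2 * α : ℝ) : ℂ) • ρα - (μ : ℂ) • (ρ₁ - ρ₂))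
    (p₁ p₂ : Fin K → ℝ)
    (hp₁ : ∀ i, ((p₁ i : ℝ) : ℂ) = (Λ i * ρ₁).trace)
    (hp₂ : ∀ i, ((p₂ i : ℝ) : ℂ) = (Λ i * ρ₂).trace) :
    ∀ i : Fin K, α * p₁ i + (1 - α) * p₂ i ≠ 0 →
      lam i = α - μ * (p₁ i - p₂ i) / (2 * (α * p₁ i + (1 - α) * p₂ i)) := by
  intro i hq
  -- M * Λ i = lam i • Λ i
  have hMΛ : M * Λ i = (lam i : ℂ) • Λ i := by
    rw [hM, Finset.sum_mul]
    rw [Finset.sum_eq_single i]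
    · rw [smul_mul_assoc, hidem]
    · intro j _ hj
      rw [smul_mul_assoc, horth j i hj, smul_zero]
    · intro h; exact absurd (Finset.mem_univ i) h
  have hΛM : Λ i * M = (lam i : ℂ) • Λ i := by
    rw [hM, Finset.mul_sum]
    rw [Finset.sum_eq_single i]
    · rw [mul_smul_comm, hidem]
    · intro j _ hj
      rw [mul_smul_comm, horth i j (Ne.symm hj), smul_zero]
    · intro h; exact absurd (Finset.mem_univ i) h
  -- trace of Λ i * ρα
  have htrρα : (Λ i * ρα).trace = ((α * p₁ i + (1 - α) * p₂ i : ℝ) : ℂ) := by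
    rw [hρα, Matrix.mul_add, Matrix.mul_smul, Matrix.mul_smul, Matrix.trace_add,
      Matrix.trace_smul, Matrix.trace_smul, ← hp₁, ← hp₂]
    simp only [smul_eq_mul]
    push_cast
    ring
  -- multiply heq by Λ i on the left and take trace
  have key := congrArg (fun X => (Λ i * X).trace) heq
  simp only [Matrix.mul_add, Matrix.mul_sub, Matrix.mul_smul, Matrix.trace_add,
    Matrix.trace_sub, Matrix.trace_smul] at key
  have hc1 : (Λ i * (ρα * M)).trace = (lam i : ℂ) * (Λ i * ρα).trace := by
    rw [← Matrix.mul_assoc, Matrix.trace_mul_cycle, hMΛ,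
      Matrix.smul_mul, Matrix.trace_smul, Matrix.trace_mul_comm]
    simp [smul_eq_mul]
  have hc2 : (Λ i * (M * ρα)).trace = (lam i : ℂ) * (Λ i * ρα).trace := by
    rw [← Matrix.mul_assoc, hΛM, Matrix.smul_mul, Matrix.trace_smul]
    simp [smul_eq_mul]
  rw [hc1, hc2, htrρα, ← hp₁, ← hp₂] at key
  simp only [smul_eq_mul] at key
  -- now key is a complex scalar equation; transfer to ℝ
  have keyR : lam i * (α * p₁ i + (1 - α) * p₂ i) + lam i * (α * p₁ i + (1 - α) * p₂ i)
      = 2 * α * (α * p₁ i + (1 - α) * p₂ i) - μ * (p₁ i - p₂ i) := by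
    apply Complex.ofReal_injective
    have := key
    push_cast at this ⊢
    linear_combination this
  have h2 : 2 * (α * p₁ i + (1 - α) * p₂ i) ≠ 0 := mul_ne_zero two_ne_zero hq
  rw [eq_sub_iff_add_eq, ← eq_sub_iff_add_eq', div_eq_iff h2]
  linear_combination keyR
end

section
/- Let ρ⁽¹⁾, ρ⁽²⁾ be D×D Hermitian complex matrices, α, μ ∈ ℝ, and ρ_α = α·ρ⁽¹⁾ + (1−α)·ρ⁽²⁾. Let M be a Hermitian matrix with Tr(ρ⁽¹⁾ M) = 1 and Tr(ρ⁽²⁾ M) = 0, satisfying ρ_α M + M ρ_α = 2α ρ_α − μ (ρ⁽¹⁾ − ρ⁽²⁾). Then Tr(ρ_α M²) = α² − μ/2; consequently the variance satisfies Tr(ρ_α M²) − (Tr(ρ_α M))² = −μ/2. -/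
/-- Eqs. (trsq)–(var_con): an unbiased observable satisfying the Lagrange optimality
equation has `Tr(ρ_α M²) = α² − μ/2`, hence variance `−μ/2`. -/
theorem variance_eq_neg_half_multiplier
    {D : ℕ} (ρ₁ ρ₂ : Matrix (Fin D) (Fin D) ℂ)
    (h₁ : ρ₁.IsHermitian) (h₂ : ρ₂.IsHermitian)
    (α μ : ℝ) (ρα : Matrix (Fin D) (Fin D) ℂ)
    (hρα : ρα = (α : ℂ) • ρ₁ + ((1 - α : ℝ) : ℂ) • ρ₂)
    (M : Matrix (Fin D) (Fin D) ℂ) (hM : M.IsHermitian)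
    (htr₁ : (ρ₁ * M).trace = 1) (htr₂ : (ρ₂ * M).trace = 0)
    (heq : ρα * M + M * ρα = ((2 * α : ℝ) : ℂ) • ρα - (μ : ℂ) • (ρ₁ - ρ₂)) :
    (ρα * (M * M)).trace = ((α ^ 2 - μ / 2 : ℝ) : ℂ) ∧
      (ρα * (M * M)).trace - ((ρα * M).trace) ^ 2 = ((-(μ / 2) : ℝ) : ℂ) := by
  have hA : (ρα * M).trace = (α : ℂ) := by
    rw [hρα]
    simp [Matrix.add_mul, Matrix.smul_mul, htr₁, htr₂]
  have hραM : ((ρ₁ - ρ₂) * M).trace = 1 := by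
    simp [Matrix.sub_mul, htr₁, htr₂]
  have key := congrArg (fun X => (X * M).trace) heq
  simp only [Matrix.add_mul, Matrix.sub_mul, Matrix.smul_mul, Matrix.trace_add,
    Matrix.trace_sub, Matrix.trace_smul, smul_eq_mul] at key
  rw [Matrix.trace_mul_cycle M ρα M] at key
  rw [show ρα * M * M = ρα * (M * M) by rw [Matrix.mul_assoc]] at key
  rw [Matrix.trace_mul_comm (M * M) ρα, htr₁, htr₂, hA] at key
  have h2 : (2 : ℂ) * (ρα * (M * M)).trace = 2 * (α : ℂ) * α - μ := by
    push_cast at key ⊢; linear_combination key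
  have htr : (ρα * (M * M)).trace = ((α ^ 2 - μ / 2 : ℝ) : ℂ) := by
    push_cast; linear_combination h2 / 2
  refine ⟨htr, ?_⟩
  rw [htr, hA]; push_cast; ring
end

section
/- Let ρ⁽¹⁾, ρ⁽²⁾ be D×D Hermitian complex matrices with Tr ρ⁽¹⁾ = Tr ρ⁽²⁾ = 1, set ρ_{1/2} = (ρ⁽¹⁾ + ρ⁽²⁾)/2 and ρ_α = α·ρ⁽¹⁾ + (1−α)·ρ⁽²⁾. Let L be Hermitian with (1/2)(ρ_{1/2} L + L ρ_{1/2}) = ρ⁽¹⁾ − ρ⁽²⁾, and suppose I_q := Tr(ρ_{1/2} L²) is nonzero. Define M = (1/2)·1 + (1/I_q)·L. Then Tr(ρ_α M) = α for every α ∈ ℝ, and the total variance satisfies ∫₀¹ [ Tr(ρ_α M²) − (Tr(ρ_α M))² ] dα = 1/I_q − 1/12. -/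
/-- The globally optimal observable `M = (1/2)·1 + L/I_q` built from the symmetric
logarithmic derivative `L` at `α = 1/2` is unbiased (`Tr(ρ_α M) = α` for all `α`) and
achieves total variance `∫₀¹ Δ²_{ρ_α} M dα = 1/I_q − 1/12`. -/
theorem global_optimal_observable_total_variance
    {D : ℕ} (ρ₁ ρ₂ : Matrix (Fin D) (Fin D) ℂ)
    (h₁ : ρ₁.IsHermitian) (h₂ : ρ₂.IsHermitian)
    (htr₁ : ρ₁.trace = 1) (htr₂ : ρ₂.trace = 1)
    (ρhalf : Matrix (Fin D) (Fin D) ℂ)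
    (hρhalf : ρhalf = ((1 / 2 : ℝ) : ℂ) • (ρ₁ + ρ₂))
    (ρ : ℝ → Matrix (Fin D) (Fin D) ℂ)
    (hρ : ∀ α : ℝ, ρ α = (α : ℂ) • ρ₁ + ((1 - α : ℝ) : ℂ) • ρ₂)
    (L : Matrix (Fin D) (Fin D) ℂ) (hL : L.IsHermitian)
    (hsld : ((1 : ℂ) / 2) • (ρhalf * L + L * ρhalf) = ρ₁ - ρ₂)
    (Iq : ℝ) (hIq : (ρhalf * (L * L)).trace = (Iq : ℂ)) (hIq0 : Iq ≠ 0)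
    (M : Matrix (Fin D) (Fin D) ℂ)
    (hM : M = ((1 / 2 : ℝ) : ℂ) • (1 : Matrix (Fin D) (Fin D) ℂ) + ((1 / Iq : ℝ) : ℂ) • L) :
    (∀ α : ℝ, (ρ α * M).trace = (α : ℂ)) ∧
      (∫ α in (0 : ℝ)..1,
          (((ρ α * (M * M)).trace).re - (((ρ α * M).trace).re) ^ 2))
        = 1 / Iq - 1 / 12 := by
  have hIqC : (Iq : ℂ) ≠ 0 := Complex.ofReal_ne_zero.mpr hIq0
  -- split ρ α
  have hsplit : ∀ α : ℝ, ρ α = ρhalf + ((α - 1/2 : ℝ) : ℂ) • (ρ₁ - ρ₂) := by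
    intro α
    rw [hρ, hρhalf]
    push_cast
    module
  -- trace ρhalf L = 0
  have e1 : (ρhalf * L).trace = 0 := by
    have h := congrArg Matrix.trace hsld
    rw [Matrix.trace_smul, Matrix.trace_add, Matrix.trace_mul_comm L ρhalf,
      Matrix.trace_sub, htr₁, htr₂, smul_eq_mul] at h
    linear_combination h
  -- trace (ρ₁ - ρ₂) L = Iq
  have e2 : ((ρ₁ - ρ₂) * L).trace = (Iq : ℂ) := by
    rw [← hsld]
    have : (((1:ℂ)/2) • (ρhalf * L + L * ρhalf)) * L
        = ((1:ℂ)/2) • (ρhalf * L * L + L * ρhalf * L) := by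
      rw [Matrix.smul_mul, add_mul]
    rw [this, Matrix.trace_smul, Matrix.trace_add,
      Matrix.trace_mul_comm (L * ρhalf) L, ← Matrix.mul_assoc L L ρhalf,
      Matrix.trace_mul_comm (L * L) ρhalf, Matrix.mul_assoc ρhalf L L, hIq,
      smul_eq_mul]
    ring
  set c : ℂ := ((ρ₁ - ρ₂) * (L * L)).trace with hc
  -- trace ρ α = 1
  have etr : ∀ α : ℝ, (ρ α).trace = 1 := by
    intro α
    rw [hρ, Matrix.trace_add, Matrix.trace_smul, Matrix.trace_smul, htr₁, htr₂]
    simp only [smul_eq_mul, mul_one]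
    push_cast
    ring
  -- trace ρ α * L
  have eL : ∀ α : ℝ, (ρ α * L).trace = ((α - 1/2 : ℝ) : ℂ) * (Iq : ℂ) := by
    intro α
    rw [hsplit α, Matrix.add_mul, Matrix.smul_mul, Matrix.trace_add,
      Matrix.trace_smul, e1, e2]
    simp [smul_eq_mul]
  -- trace ρ α * L²
  have eL2 : ∀ α : ℝ, (ρ α * (L * L)).trace = (Iq : ℂ) + ((α - 1/2 : ℝ) : ℂ) * c := by
    intro α
    rw [hsplit α, Matrix.add_mul, Matrix.smul_mul, Matrix.trace_add,
      Matrix.trace_smul, hIq, smul_eq_mul]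
  -- unbiasedness
  have part1 : ∀ α : ℝ, (ρ α * M).trace = (α : ℂ) := by
    intro α
    rw [hM, Matrix.mul_add, Matrix.mul_smul, Matrix.mul_smul, Matrix.mul_one,
      Matrix.trace_add, Matrix.trace_smul, Matrix.trace_smul, etr α, eL α]
    simp only [smul_eq_mul]
    push_cast
    field_simp
    try ring
  refine ⟨part1, ?_⟩
  -- second moment trace
  have eM2 : ∀ α : ℝ, (ρ α * (M * M)).trace
      = ((1/4 : ℝ) : ℂ) + ((α - 1/2 : ℝ) : ℂ) + ((1 / Iq^2 : ℝ) : ℂ) * ((Iq : ℂ) + ((α - 1/2 : ℝ) : ℂ) * c) := by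
    intro α
    have hMM : M * M = ((1/4 : ℝ) : ℂ) • (1 : Matrix (Fin D) (Fin D) ℂ)
        + ((1 / Iq : ℝ) : ℂ) • L + ((1 / Iq^2 : ℝ) : ℂ) • (L * L) := by
      rw [hM]
      simp only [Matrix.add_mul, Matrix.mul_add, Matrix.smul_mul, Matrix.mul_smul,
        Matrix.one_mul, Matrix.mul_one, smul_smul]
      push_cast
      module
    rw [hMM, Matrix.mul_add, Matrix.mul_add, Matrix.mul_smul, Matrix.mul_smul,
      Matrix.mul_smul, Matrix.mul_one, Matrix.trace_add, Matrix.trace_add,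
      Matrix.trace_smul, Matrix.trace_smul, Matrix.trace_smul, etr α, eL α, eL2 α]
    simp only [smul_eq_mul]
    push_cast
    field_simp
    try ring
  -- rewrite the integrand as a polynomial in α
  set k : ℝ := c.re / Iq^2 with hk
  have hint : ∀ α : ℝ,
      (((ρ α * (M * M)).trace).re - (((ρ α * M).trace).re) ^ 2)
        = -α^2 + α - 1/4 + 1/Iq + (α - 1/2) * k := by
    intro α
    rw [eM2 α, part1 α]
    simp only [Complex.add_re, Complex.ofReal_re, Complex.mul_re, Complex.ofReal_im,
      Complex.add_im, Complex.mul_im]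
    rw [hk]
    field_simp
    try ring
  rw [intervalIntegral.integral_congr (fun α _ => hint α)]
  have : (∫ α in (0:ℝ)..1, (-α^2 + α - 1/4 + 1/Iq + (α - 1/2) * k))
      = ∫ α in (0:ℝ)..1, ((-(1:ℝ)) * α^2 + (1 + k) * α + (-1/4 + 1/Iq - k/2)) := by
    apply intervalIntegral.integral_congr
    intro α _
    ring
  rw [this]
  rw [intervalIntegral.integral_add, intervalIntegral.integral_add]
  · rw [intervalIntegral.integral_const_mul, intervalIntegral.integral_const_mul,
      integral_id, intervalIntegral.integral_const]
    have : (∫ α in (0:ℝ)..1, α^2) = 1/3 := by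
      simp [integral_pow]
      norm_num
    rw [this]
    norm_num
    ring
  all_goals
    apply Continuous.intervalIntegrable
    fun_prop
end

section
/- Let n, m be natural numbers with 1 ≤ m ≤ n − 1, set D = 2ⁿ. Let v₁, v₂ ∈ ℂ^D be orthonormal vectors, r ∈ [0,1], and define ρ⁽¹⁾ = r·|v₁⟩⟨v₁| + (1−r)·|v₂⟩⟨v₂|, ρ_α = α·ρ⁽¹⁾ + ((1−α)/2ⁿ)·1. Let Λ be a D×D orthogonal projector of rank 2^{n−m} with Λv₁ = v₁ and Λv₂ = v₂, and define the observable M = Λ + (1/(1−2^m))·(1 − Λ). Then for every α ∈ ℝ: (a) Tr(ρ_α M) = α (unbiasedness); (b) Tr(ρ_α M²) − α² = (1−α)·(1/(2^m − 1) + α). -/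
open Matrix

lemma tr_vmv {N : Type*} [Fintype N] (v w : N → ℂ) (A : Matrix N N ℂ) :
    (vecMulVec v w * A).trace = w ⬝ᵥ (A *ᵥ v) := by
  simp only [trace, diag, mul_apply, vecMulVec_apply, dotProduct, mulVec]
  rw [Finset.sum_comm]
  apply Finset.sum_congr rfl
  intro k _
  rw [Finset.mul_sum]
  apply Finset.sum_congr rfl
  intro i _
  ring

lemma mul_self_eq_iff_eq_zero_or_eq_one' {x : ℝ} : x * x = x ↔ x = 0 ∨ x = 1 := by
  constructor
  · intro h
    have : x * (x - 1) = 0 := by ring_nf; linarith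
    rcases mul_eq_zero.mp this with h | h
    · exact Or.inl h
    · exact Or.inr (by linarith)
  · rintro (h | h) <;> simp [h]

lemma trace_proj {N : Type*} [Fintype N] [DecidableEq N] {Λ : Matrix N N ℂ}
    (hherm : Λ.IsHermitian) (hidem : Λ * Λ = Λ) : Λ.trace = (Λ.rank : ℂ) := by
  have hU := hherm.spectral_theorem
  set U : Matrix N N ℂ := (hherm.eigenvectorUnitary : Matrix N N ℂ) with hUdef
  set D : Matrix N N ℂ := diagonal (RCLike.ofReal ∘ hherm.eigenvalues) with hDdef
  have hUU : star U * U = 1 := Unitary.coe_star_mul_self _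
  have hD : D = star U * Λ * U := by
    rw [hDdef, ← hherm.conjStarAlgAut_star_eigenvectorUnitary, Unitary.conjStarAlgAut_star_apply]
  have hUU' : U * star U = 1 := by
    rw [hUdef]; exact Unitary.coe_mul_star_self _
  have hDD : D * D = D := by
    rw [hD]
    calc star U * Λ * U * (star U * Λ * U)
        = star U * (Λ * (U * star U) * Λ) * U := by noncomm_ring
      _ = star U * Λ * U := by rw [hUU', mul_one, hidem]
  have heig : ∀ i, hherm.eigenvalues i = 0 ∨ hherm.eigenvalues i = 1 := by
    intro i
    have := congr_fun (congr_fun hDD i) i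
    simp only [hDdef, mul_apply, diagonal_apply, Function.comp_apply] at this
    rw [Finset.sum_eq_single i] at this
    · simp only [if_pos rfl] at this
      have h2 : (hherm.eigenvalues i : ℂ) * hherm.eigenvalues i = hherm.eigenvalues i := this
      have : (hherm.eigenvalues i) * hherm.eigenvalues i = hherm.eigenvalues i := by
        exact_mod_cast h2
      rcases mul_self_eq_iff_eq_zero_or_eq_one'.mp this with h | h
      · exact Or.inl h
      · exact Or.inr h
    · intro b _ hb
      simp [hb, Ne.symm hb]
    · simp
  have htr : Λ.trace = D.trace := by
    conv_lhs => rw [hU]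
    rw [Unitary.conjStarAlgAut_apply, trace_mul_cycle, Unitary.coe_star_mul_self, one_mul]
  rw [htr, hherm.rank_eq_card_non_zero_eigs]
  rw [hDdef, trace_diagonal]
  classical
  rw [Fintype.card_subtype]
  rw [Finset.card_eq_sum_ones, Nat.cast_sum]
  rw [Finset.sum_filter]
  apply Finset.sum_congr rfl
  intro i _
  rcases heig i with h | h <;> simp [h]


/-- The paper's optimal `m`-qubit-measurement observable `M = Λ + (1/(1−2^m))(1 − Λ)`,
built on a rank-`2^{n−m}` projector `Λ` fixing the eigenvectors of
`ρ⁽¹⁾ = r|v₁⟩⟨v₁| + (1−r)|v₂⟩⟨v₂|`, is unbiased for the mixture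
`ρ_α = αρ⁽¹⁾ + ((1−α)/2ⁿ)·1` and has variance `(1−α)(1/(2^m − 1) + α)`. -/
theorem m_qubit_observable_unbiased_and_variance
    {n m : ℕ} (hm : 1 ≤ m) (hmn : m ≤ n - 1)
    (v₁ v₂ : Fin (2 ^ n) → ℂ)
    (hv₁ : star v₁ ⬝ᵥ v₁ = 1) (hv₂ : star v₂ ⬝ᵥ v₂ = 1) (hv₁₂ : star v₁ ⬝ᵥ v₂ = 0)
    (r : ℝ) (hr0 : 0 ≤ r) (hr1 : r ≤ 1)
    (ρ₁ : Matrix (Fin (2 ^ n)) (Fin (2 ^ n)) ℂ)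
    (hρ₁ : ρ₁ = (r : ℂ) • vecMulVec v₁ (star v₁) + ((1 - r : ℝ) : ℂ) • vecMulVec v₂ (star v₂))
    (ρ : ℝ → Matrix (Fin (2 ^ n)) (Fin (2 ^ n)) ℂ)
    (hρ : ∀ α : ℝ, ρ α = (α : ℂ) • ρ₁ + (((1 - α) / 2 ^ n : ℝ) : ℂ) • (1 : Matrix (Fin (2 ^ n)) (Fin (2 ^ n)) ℂ))
    (Λ : Matrix (Fin (2 ^ n)) (Fin (2 ^ n)) ℂ)
    (hherm : Λ.IsHermitian) (hidem : Λ * Λ = Λ)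
    (hrank : Λ.rank = 2 ^ (n - m))
    (hΛ₁ : Λ *ᵥ v₁ = v₁) (hΛ₂ : Λ *ᵥ v₂ = v₂)
    (M : Matrix (Fin (2 ^ n)) (Fin (2 ^ n)) ℂ)
    (hM : M = Λ + ((1 / (1 - 2 ^ m) : ℝ) : ℂ) • ((1 : Matrix (Fin (2 ^ n)) (Fin (2 ^ n)) ℂ) - Λ)) :
    ∀ α : ℝ,
      (ρ α * M).trace = (α : ℂ) ∧
      (ρ α * (M * M)).trace - ((α : ℂ)) ^ 2
        = (((1 - α) * (1 / (2 ^ m - 1) + α) : ℝ) : ℂ) := by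
  -- scalar setup
  have hmn' : m ≤ n := le_trans hmn (Nat.sub_le n 1)
  have hq1 : (2 : ℝ) ^ m ≠ 1 := by
    have : (2 : ℝ) ^ 1 ≤ 2 ^ m := pow_le_pow_right₀ one_le_two hm
    norm_num at this; linarith
  have hq1C : (2 : ℂ) ^ m ≠ 1 := by
    intro h
    apply hq1
    have := congrArg Complex.re h
    push_cast at this ⊢
    exact_mod_cast h
  have hqne : (1 : ℂ) - 2 ^ m ≠ 0 := sub_ne_zero.mpr (Ne.symm hq1C)
  have hqne' : (2 : ℂ) ^ m - 1 ≠ 0 := sub_ne_zero.mpr hq1C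
  have h2nne : (2 : ℂ) ^ n ≠ 0 := pow_ne_zero _ two_ne_zero
  have h2n : (2 : ℂ) ^ n = 2 ^ (n - m) * 2 ^ m := by
    rw [← pow_add]; congr 1; omega
  -- trace of Λ
  have hTrΛ : Λ.trace = (2 : ℂ) ^ (n - m) := by
    rw [trace_proj hherm hidem, hrank]; push_cast; ring
  set c : ℂ := ((1 / (1 - 2 ^ m) : ℝ) : ℂ) with hc
  have hcval : c = 1 / (1 - (2 : ℂ) ^ m) := by rw [hc]; push_cast; ring
  -- key computation for A = Λ + d • (1 - Λ)
  intro α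
  have key : ∀ d : ℂ, (ρ α * (Λ + d • ((1 : Matrix (Fin (2 ^ n)) (Fin (2 ^ n)) ℂ) - Λ))).trace
      = (α : ℂ) + (((1 - α) / 2 ^ n : ℝ) : ℂ) * ((2 : ℂ) ^ (n - m) + d * (2 ^ n - 2 ^ (n - m))) := by
    intro d
    set A : Matrix (Fin (2 ^ n)) (Fin (2 ^ n)) ℂ :=
      Λ + d • ((1 : Matrix (Fin (2 ^ n)) (Fin (2 ^ n)) ℂ) - Λ) with hA
    have hAv₁ : A *ᵥ v₁ = v₁ := by
      rw [hA, add_mulVec, smul_mulVec, sub_mulVec, one_mulVec, hΛ₁]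
      simp
    have hAv₂ : A *ᵥ v₂ = v₂ := by
      rw [hA, add_mulVec, smul_mulVec, sub_mulVec, one_mulVec, hΛ₂]
      simp
    have hTrA : A.trace = (2 : ℂ) ^ (n - m) + d * (2 ^ n - 2 ^ (n - m)) := by
      rw [hA, trace_add, trace_smul, trace_sub, trace_one, hTrΛ]
      simp only [Fintype.card_fin, smul_eq_mul]
      push_cast
      ring
    have hTrρ₁A : (ρ₁ * A).trace = 1 := by
      rw [hρ₁, add_mul, smul_mul_assoc, smul_mul_assoc, trace_add, trace_smul, trace_smul,
        tr_vmv, tr_vmv, hAv₁, hAv₂, hv₁, hv₂, smul_eq_mul, smul_eq_mul]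
      push_cast; ring
    rw [hρ α, add_mul, smul_mul_assoc, smul_mul_assoc, one_mul, trace_add, trace_smul,
      trace_smul, hTrρ₁A, hTrA]
    simp
  constructor
  · have := key c
    rw [← hM] at this
    rw [this, hcval]
    have : (2 : ℂ) ^ (n - m) + 1 / (1 - (2 : ℂ) ^ m) * (2 ^ n - 2 ^ (n - m)) = 0 := by
      rw [h2n]; field_simp; ring
    rw [this, mul_zero, add_zero]
  · have hMM : M * M = Λ + (c * c) • ((1 : Matrix (Fin (2 ^ n)) (Fin (2 ^ n)) ℂ) - Λ) := by
      have h1 : Λ * ((1 : Matrix (Fin (2 ^ n)) (Fin (2 ^ n)) ℂ) - Λ) = 0 := by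
        rw [mul_sub, mul_one, hidem, sub_self]
      have h2 : ((1 : Matrix (Fin (2 ^ n)) (Fin (2 ^ n)) ℂ) - Λ) * Λ = 0 := by
        rw [sub_mul, one_mul, hidem, sub_self]
      have h3 : ((1 : Matrix (Fin (2 ^ n)) (Fin (2 ^ n)) ℂ) - Λ) *
          ((1 : Matrix (Fin (2 ^ n)) (Fin (2 ^ n)) ℂ) - Λ)
          = (1 : Matrix (Fin (2 ^ n)) (Fin (2 ^ n)) ℂ) - Λ := by
        rw [sub_mul, one_mul, h1, sub_zero]
      rw [hM, add_mul, mul_add, mul_add, smul_mul_assoc, smul_mul_assoc,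
        mul_smul_comm, mul_smul_comm, h1, h2, h3, hidem]
      simp [smul_smul]
    rw [hMM, key (c * c), hcval]
    have hval : (2 : ℂ) ^ (n - m) + 1 / (1 - (2 : ℂ) ^ m) * (1 / (1 - (2 : ℂ) ^ m))
        * (2 ^ n - 2 ^ (n - m)) = 2 ^ n / (2 ^ m - 1) := by
      rw [h2n]; field_simp; ring
    rw [hval]
    push_cast
    field_simp
    ring
end

section
/- Let n ≥ 1, D = 2ⁿ, let (v_i)_{i=1}^D be an orthonormal basis of ℂ^D, let r ∈ [0,1], and define ρ⁽¹⁾ = r·|v₁⟩⟨v₁| + (1−r)·|v₂⟩⟨v₂|, ρ⁽²⁾ = (1/2ⁿ)·1, ρ_α = α·ρ⁽¹⁾ + (1−α)·ρ⁽²⁾. Set I_q = 4 − 8(r−1)/(2ⁿ(r−1) − 1) − 8r/(2ⁿ r + 1), and assume I_q ≠ 0. Define M = Σ_{i=1}^D λ_i |v_i⟩⟨v_i| with λ₁ = 1/2 + (2/I_q)·(r − 2^{−n})/(r + 2^{−n}), λ₂ = 1/2 + (2/I_q)·((1−r) − 2^{−n})/((1−r) + 2^{−n}), and λ_i = 1/2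 − 2/I_q for i ≥ 3. Set A = (1−2r)², B = 1 − 2ⁿ + 2ⁿ(2ⁿ − 4)(r−1)r, C = r(r−1), and assume B ≠ 0. Then for every α ∈ ℝ: (a) Tr(ρ_α M) = α (unbiasedness); (b) Tr(ρ_α M²) − α² = (1−α)α + (2α−1)(1 − 2ⁿA)A/B² + ( 2(2 + 2ⁿ)C − α(1 + 2(4 + 2ⁿ)C) )/B. -/
open Matrix

lemma aux_sum_split {D : ℕ} (g : Fin D → ℝ) (k : ℝ) (i0 i1 : Fin D)
    (h01 : i0 ≠ i1)
    (hg : ∀ i, i ≠ i0 → i ≠ i1 → g i = k) :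
    ∑ i, g i = g i0 + g i1 + ((D - 2 : ℕ) : ℝ) * k := by
  rw [← Finset.add_sum_erase _ g (Finset.mem_univ i0),
    ← Finset.add_sum_erase _ g (Finset.mem_erase.2 ⟨h01.symm, Finset.mem_univ i1⟩)]
  rw [Finset.sum_congr rfl (fun i hi => by
    simp only [Finset.mem_erase] at hi
    exact hg i hi.2.1 hi.1)]
  rw [Finset.sum_const, Finset.card_erase_of_mem
    (Finset.mem_erase.2 ⟨h01.symm, Finset.mem_univ i1⟩),
    Finset.card_erase_of_mem (Finset.mem_univ i0), Finset.card_univ, Fintype.card_fin,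
    nsmul_eq_mul]
  have : D - 1 - 1 = D - 2 := by omega
  rw [this]
  ring

lemma aux_scalar (r α l0 l1 cc d A B C : ℝ) (hd0 : d ≠ 0)
    (hB : B = 1 - d + d * (d - 4) * (r - 1) * r) (hB0 : B ≠ 0)
    (hl0 : l0 = 1 / 2 - (d * r - 1) * (d * (1 - r) + 1) / (2 * B))
    (hl1 : l1 = 1 / 2 - (d * (1 - r) - 1) * (d * r + 1) / (2 * B))
    (hcc : cc = 1 / 2 + (d * r + 1) * (d * (1 - r) + 1) / (2 * B))
    (hA : A = (1 - 2 * r) ^ 2) (hC : C = r * (r - 1)) :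
    (α * (r * l0 + (1 - r) * l1) + (1 - α) * (1 / d) * (l0 + l1 + (d - 2) * cc) = α)
    ∧ (α * (r * l0 ^ 2 + (1 - r) * l1 ^ 2)
        + (1 - α) * (1 / d) * (l0 ^ 2 + l1 ^ 2 + (d - 2) * cc ^ 2) - α ^ 2
      = (1 - α) * α + (2 * α - 1) * (1 - d * A) * A / B ^ 2
          + (2 * (2 + d) * C - α * (1 + 2 * (4 + d) * C)) / B) := by
  subst hl0 hl1 hcc hA hC
  constructor <;>
  · field_simp
    subst hB
    ring

/-- The paper's globally optimal full-measurement observable (Eq. lambdas_opt_n) for the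
mixture `ρ_α = αρ⁽¹⁾ + (1−α)·2^{−n}·1` with `ρ⁽¹⁾ = r|v₁⟩⟨v₁| + (1−r)|v₂⟩⟨v₂|` is unbiased
and has the variance given in Eq. (obs_opt-n). -/
theorem full_measurement_observable_unbiased_and_variance
    {n : ℕ} (hn : 1 ≤ n)
    (v : Fin (2 ^ n) → (Fin (2 ^ n) → ℂ))
    (hv : ∀ i j, star (v i) ⬝ᵥ v j = if i = j then 1 else 0)
    (r : ℝ) (hr0 : 0 ≤ r) (hr1 : r ≤ 1)
    (ρ₁ ρ₂ : Matrix (Fin (2 ^ n)) (Fin (2 ^ n)) ℂ)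
    (hρ₁ : ρ₁ = (r : ℂ) • vecMulVec (v 0) (star (v 0))
        + ((1 - r : ℝ) : ℂ) • vecMulVec (v 1) (star (v 1)))
    (hρ₂ : ρ₂ = ((1 / 2 ^ n : ℝ) : ℂ) • (1 : Matrix (Fin (2 ^ n)) (Fin (2 ^ n)) ℂ))
    (ρ : ℝ → Matrix (Fin (2 ^ n)) (Fin (2 ^ n)) ℂ)
    (hρ : ∀ α : ℝ, ρ α = (α : ℂ) • ρ₁ + ((1 - α : ℝ) : ℂ) • ρ₂)
    (Iq : ℝ)
    (hIq : Iq = 4 - 8 * (r - 1) / (2 ^ n * (r - 1) - 1) - 8 * r / (2 ^ n * r + 1))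
    (hIq0 : Iq ≠ 0)
    (lam : Fin (2 ^ n) → ℝ)
    (hlam₁ : lam 0 = 1 / 2 + (2 / Iq) * ((r - 1 / 2 ^ n) / (r + 1 / 2 ^ n)))
    (hlam₂ : lam 1 = 1 / 2 + (2 / Iq) * (((1 - r) - 1 / 2 ^ n) / ((1 - r) + 1 / 2 ^ n)))
    (hlam : ∀ i : Fin (2 ^ n), i ≠ 0 → i ≠ 1 → lam i = 1 / 2 - 2 / Iq)
    (M : Matrix (Fin (2 ^ n)) (Fin (2 ^ n)) ℂ)
    (hM : M = ∑ i, (lam i : ℂ) • vecMulVec (v i) (star (v i)))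
    (A B C : ℝ)
    (hA : A = (1 - 2 * r) ^ 2)
    (hB : B = 1 - 2 ^ n + 2 ^ n * (2 ^ n - 4) * (r - 1) * r) (hB0 : B ≠ 0)
    (hC : C = r * (r - 1)) :
    ∀ α : ℝ,
      (ρ α * M).trace = (α : ℂ) ∧
      (ρ α * (M * M)).trace - ((α : ℂ)) ^ 2
        = (((1 - α) * α + (2 * α - 1) * (1 - 2 ^ n * A) * A / B ^ 2
            + (2 * (2 + 2 ^ n) * C - α * (1 + 2 * (4 + 2 ^ n) * C)) / B : ℝ) : ℂ) := by
  intro α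
  -- basic numeric facts
  have h2n : 2 ≤ 2 ^ n := by
    calc 2 = 2 ^ 1 := by norm_num
    _ ≤ 2 ^ n := Nat.pow_le_pow_right (by norm_num) hn
  have h01 : (0 : Fin (2 ^ n)) ≠ 1 := by
    intro h
    have h' := congrArg Fin.val h
    have hv1 : ((1 : Fin (2 ^ n)) : ℕ) = 1 % 2 ^ n := rfl
    rw [hv1, Nat.mod_eq_of_lt (by omega)] at h'
    exact absurd h' (by norm_num)
  have hd0 : (0:ℝ) < 2 ^ n := by positivity
  have he1 : (0:ℝ) < 2 ^ n * r + 1 := by nlinarith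
  have he2 : (0:ℝ) < 2 ^ n * (1 - r) + 1 := by nlinarith
  have he2' : (2:ℝ) ^ n * (r - 1) - 1 ≠ 0 := by nlinarith
  have he3 : r + 1 / 2 ^ n ≠ 0 := by positivity
  have he4 : (1 - r) + 1 / 2 ^ n ≠ 0 := by
    have := one_div_pos.2 hd0; nlinarith
  have h2B : (2:ℝ) * B ≠ 0 := mul_ne_zero two_ne_zero hB0
  -- matrix lemmas
  have hvmv : ∀ a b c d : Fin (2 ^ n) → ℂ,
      vecMulVec a b * vecMulVec c d = (b ⬝ᵥ c) • vecMulVec a d := by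
    intro a b c d
    ext i j
    simp only [mul_apply, vecMulVec_apply, Matrix.smul_apply, dotProduct, smul_eq_mul,
      Finset.sum_mul]
    exact Finset.sum_congr rfl fun k _ => by ring
  have htr : ∀ i, (vecMulVec (v i) (star (v i))).trace = 1 := by
    intro i
    have : (vecMulVec (v i) (star (v i))).trace = v i ⬝ᵥ star (v i) := by
      simp [trace, diag, vecMulVec_apply, dotProduct]
    rw [this, dotProduct_comm, hv]
    simp
  have hPP : ∀ i j, (vecMulVec (v i) (star (v i)) * vecMulVec (v j) (star (v j))).trace
      = if i = j then 1 else 0 := by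
    intro i j
    rw [hvmv, trace_smul, hv]
    by_cases h : i = j
    · subst h; simp [htr]
    · simp [h]
  have key : ∀ c : Fin (2 ^ n) → ℝ,
      (ρ α * ∑ i, (c i : ℂ) • vecMulVec (v i) (star (v i))).trace
        = (α : ℂ) * ((r : ℂ) * c 0 + ((1 - r : ℝ) : ℂ) * c 1)
          + ((1 - α : ℝ) : ℂ) * ((1 / 2 ^ n : ℝ) : ℂ) * ((∑ i, c i : ℝ) : ℂ) := by
    intro c
    rw [hρ, hρ₁, hρ₂]
    simp only [smul_mul_assoc, Matrix.one_mul, add_mul, Finset.mul_sum, Matrix.mul_smul,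
      trace_add, trace_smul, trace_sum, hPP, htr, smul_eq_mul, smul_add, Finset.smul_sum]
    simp only [Finset.sum_add_distrib, Finset.sum_ite_eq, Finset.mem_univ, if_true]
    push_cast
    simp only [mul_ite, mul_one, mul_zero, Finset.sum_ite_eq, Finset.mem_univ, if_true,
      ← Finset.mul_sum]
    ring
  have hMM : M * M = ∑ i, ((lam i ^ 2 : ℝ) : ℂ) • vecMulVec (v i) (star (v i)) := by
    rw [hM, Finset.sum_mul_sum]
    rw [Finset.sum_congr rfl (fun i _ => Finset.sum_eq_single i
      (fun j _ hji => by
        rw [smul_mul_assoc, mul_smul_comm, hvmv, hv]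
        simp [Ne.symm hji])
      (fun h => absurd (Finset.mem_univ i) h))]
    refine Finset.sum_congr rfl fun i _ => ?_
    rw [smul_mul_assoc, mul_smul_comm, hvmv, hv]
    rw [show ((lam i ^ 2 : ℝ) : ℂ) = (lam i : ℂ) * (lam i : ℂ) by push_cast; ring]
    simp [smul_smul]
    norm_cast
  -- scalar values of the eigenvalues
  have hinv : 2 / Iq = -((2 ^ n * r + 1) * (2 ^ n * (1 - r) + 1)) / (2 * B) := by
    rw [div_eq_div_iff hIq0 h2B, hIq, hB]
    field_simp [he1.ne', he2.ne', he2']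
    ring
  have hl0 : lam 0 = 1 / 2 - (2 ^ n * r - 1) * (2 ^ n * (1 - r) + 1) / (2 * B) := by
    rw [hlam₁, hinv, div_mul_div_comm,
      show (1:ℝ)/2 - (2^n*r-1)*(2^n*(1-r)+1)/(2*B)
        = 1/2 + (-((2^n*r-1)*(2^n*(1-r)+1)))/(2*B) by ring]
    congr 1
    rw [div_eq_div_iff (mul_ne_zero h2B he3) h2B]
    field_simp [hd0.ne']
  have hl1 : lam 1 = 1 / 2 - (2 ^ n * (1 - r) - 1) * (2 ^ n * r + 1) / (2 * B) := by
    rw [hlam₂, hinv, div_mul_div_comm,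
      show (1:ℝ)/2 - (2^n*(1-r)-1)*(2^n*r+1)/(2*B)
        = 1/2 + (-((2^n*(1-r)-1)*(2^n*r+1)))/(2*B) by ring]
    congr 1
    rw [div_eq_div_iff (mul_ne_zero h2B he4) h2B]
    field_simp [hd0.ne']
  have hk : (1:ℝ) / 2 - 2 / Iq = 1 / 2 + (2 ^ n * r + 1) * (2 ^ n * (1 - r) + 1) / (2 * B) := by
    rw [hinv]; ring
  -- sums
  have hcast : ((2 ^ n - 2 : ℕ) : ℝ) = 2 ^ n - 2 := by
    push_cast [Nat.cast_sub h2n]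
    norm_num
  have hS1 : ∑ i, lam i = lam 0 + lam 1 + ((2:ℝ) ^ n - 2) * (1 / 2 - 2 / Iq) := by
    rw [aux_sum_split lam (1 / 2 - 2 / Iq) 0 1 h01 hlam, hcast]
  have hS2 : ∑ i, lam i ^ 2
      = lam 0 ^ 2 + lam 1 ^ 2 + ((2:ℝ) ^ n - 2) * (1 / 2 - 2 / Iq) ^ 2 := by
    rw [aux_sum_split (fun i => lam i ^ 2) ((1 / 2 - 2 / Iq) ^ 2) 0 1 h01
      (fun i hi0 hi1 => by rw [hlam i hi0 hi1]), hcast]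
  -- real scalar identities
  have haux := aux_scalar r α (lam 0) (lam 1) (1 / 2 - 2 / Iq) (2 ^ n) A B C
    hd0.ne' hB hB0 hl0 hl1 hk hA hC
  have Sa : α * (r * lam 0 + (1 - r) * lam 1) + (1 - α) * (1 / 2 ^ n) * (∑ i, lam i) = α := by
    rw [hS1]; exact haux.1
  have Sb : α * (r * lam 0 ^ 2 + (1 - r) * lam 1 ^ 2)
      + (1 - α) * (1 / 2 ^ n) * (∑ i, lam i ^ 2) - α ^ 2
      = (1 - α) * α + (2 * α - 1) * (1 - 2 ^ n * A) * A / B ^ 2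
          + (2 * (2 + 2 ^ n) * C - α * (1 + 2 * (4 + 2 ^ n) * C)) / B := by
    rw [hS2]; exact haux.2
  constructor
  · rw [hM, key lam]
    have hSa' := congrArg Complex.ofReal Sa
    push_cast at hSa' ⊢
    linear_combination hSa'
  · rw [hMM, key (fun i => lam i ^ 2)]
    have hSb' := congrArg Complex.ofReal Sb
    push_cast at hSb' ⊢
    linear_combination hSb'
end
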